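/- arXiv:1208.0629 — 9 statements merged into one kernel-verified Lean document; each statement's English description precedes it below -/
import Mathlib

section
/- Let U ⊆ ℝ^N be open and P̃ : U → (ℝ^N →L[ℝ] ℝ^N) differentiable at x ∈ U such that for every y ∈ U the operator P̃(y) is an orthogonal projection (self-adjoint and idempotent). Then ∑_{i=1}^N P̃(x) ((fderiv ℝ P̃ x (P̃(x) e_i)) e_i) = 0, where (e_1,…,e_N) is the standard orthonormal basis of ℝ^N. -/
open scoped InnerProductSpace

/-- Embedded form of `∑ᵢ ∇^E_{Xᵢ} Xᵢ = 0` from the proof of Lemma 2.2(c): for a family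
`Pt` (playing the role of `P̃`) of orthogonal projections on an open set `U`,
differentiable at `x ∈ U`, one has `∑ i, Pt x ((fderiv ℝ Pt x (Pt x eᵢ)) eᵢ) = 0`. -/
theorem sum_proj_fderiv_proj_single_eq_zero {N : ℕ}
    (U : Set (EuclideanSpace ℝ (Fin N))) (hU : IsOpen U)
    (Pt : EuclideanSpace ℝ (Fin N) → (EuclideanSpace ℝ (Fin N) →L[ℝ] EuclideanSpace ℝ (Fin N)))
    (x : EuclideanSpace ℝ (Fin N)) (hx : x ∈ U)
    (hdiff : DifferentiableAt ℝ Pt x)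
    (hsa : ∀ y ∈ U, ∀ v w : EuclideanSpace ℝ (Fin N), ⟪Pt y v, w⟫_ℝ = ⟪v, Pt y w⟫_ℝ)
    (hidem : ∀ y ∈ U, ∀ v : EuclideanSpace ℝ (Fin N), Pt y (Pt y v) = Pt y v) :
    ∑ i : Fin N,
        Pt x ((fderiv ℝ Pt x (Pt x (EuclideanSpace.single i (1 : ℝ))))
          (EuclideanSpace.single i (1 : ℝ)))
      = 0 := by
  classical
  set P : EuclideanSpace ℝ (Fin N) →L[ℝ] EuclideanSpace ℝ (Fin N) := Pt x with hPdef
  set D := fderiv ℝ Pt x with hDdef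
  have hUx : U ∈ nhds x := hU.mem_nhds hx
  -- derivative of y ↦ Pt y a
  have hDa : ∀ a : EuclideanSpace ℝ (Fin N),
      HasFDerivAt (fun y => Pt y a) (D.flip a) x := by
    intro a
    have := hdiff.hasFDerivAt.clm_apply (hasFDerivAt_const a x)
    simpa using this
  -- key relation from differentiating idempotency
  have hA : ∀ v z : EuclideanSpace ℝ (Fin N),
      P ((D v) z) + (D v) (P z) = (D v) z := by
    intro v z
    have h1 : HasFDerivAt (fun y => Pt y (Pt y z))
        (P.comp (D.flip z) + D.flip (P z)) x :=
      hdiff.hasFDerivAt.clm_apply (hDa z)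
    have heq : (fun y => Pt y (Pt y z)) =ᶠ[nhds x] (fun y => Pt y z) :=
      Filter.eventuallyEq_of_mem hUx (fun y hy => hidem y hy z)
    have e3 : fderiv ℝ (fun y => Pt y (Pt y z)) x = fderiv ℝ (fun y => Pt y z) x :=
      heq.fderiv_eq
    have key : P.comp (D.flip z) + D.flip (P z) = D.flip z := by
      rw [← h1.fderiv, e3, (hDa z).fderiv]
    have := congrArg (fun L : EuclideanSpace ℝ (Fin N) →L[ℝ] EuclideanSpace ℝ (Fin N) => L v) key
    simpa using this
  have hPP : ∀ u, P (P u) = P u := hidem x hx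
  have hPsa : ∀ a b : EuclideanSpace ℝ (Fin N), ⟪P a, b⟫_ℝ = ⟪a, P b⟫_ℝ := hsa x hx
  -- P ∘ (D v) ∘ P = 0
  have hPDP : ∀ v z : EuclideanSpace ℝ (Fin N), P ((D v) (P z)) = 0 := by
    intro v z
    have h0 := congrArg P (hA v z)
    rw [map_add, hPP] at h0
    have h2 : P ((D v) z) + P ((D v) (P z)) = P ((D v) z) + 0 := by
      simpa [hPP] using h0
    exact add_left_cancel h2
  -- derivative of self-adjointness
  have hDsa : ∀ v a b : EuclideanSpace ℝ (Fin N),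
      ⟪(D v) a, b⟫_ℝ = ⟪a, (D v) b⟫_ℝ := by
    intro v a b
    have hfa : DifferentiableAt ℝ (fun y => Pt y a) x := (hDa a).differentiableAt
    have hfb : DifferentiableAt ℝ (fun y => Pt y b) x := (hDa b).differentiableAt
    have heq : (fun y => ⟪Pt y a, b⟫_ℝ) =ᶠ[nhds x] (fun y => ⟪a, Pt y b⟫_ℝ) :=
      Filter.eventuallyEq_of_mem hUx (fun y hy => hsa y hy a b)
    have e1 : fderiv ℝ (fun y => ⟪Pt y a, b⟫_ℝ) x v = ⟪(D v) a, b⟫_ℝ := by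
      have := fderiv_inner_apply (𝕜 := ℝ) hfa (differentiableAt_const b) v
      simpa [(hDa a).fderiv] using this
    have e2 : fderiv ℝ (fun y => ⟪a, Pt y b⟫_ℝ) x v = ⟪a, (D v) b⟫_ℝ := by
      have := fderiv_inner_apply (𝕜 := ℝ) (differentiableAt_const a) hfb v
      simpa [(hDa b).fderiv] using this
    rw [← e1, ← e2, heq.fderiv_eq]
  -- abbreviations
  set e : Fin N → EuclideanSpace ℝ (Fin N) := fun i => EuclideanSpace.single i (1 : ℝ) with he
  set S := ∑ i : Fin N, P ((D (P (e i))) (e i)) with hS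
  have hrepr : ∀ v : EuclideanSpace ℝ (Fin N), ∑ j, ⟪e j, v⟫_ℝ • e j = v := by
    intro v
    have h1 := (EuclideanSpace.basisFun (Fin N) ℝ).sum_repr v
    have h2 : ∀ j, ⟪e j, v⟫_ℝ = v j := by
      intro j
      simp [he, EuclideanSpace.inner_single_left]
    simp only [h2]
    simpa [he] using h1
  have hSw : ∀ w : EuclideanSpace ℝ (Fin N), ⟪S, w⟫_ℝ = 0 := by
    intro w
    set Qc : EuclideanSpace ℝ (Fin N) →L[ℝ] EuclideanSpace ℝ (Fin N) :=
      ContinuousLinearMap.id ℝ _ - P with hQc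
    set Nc : EuclideanSpace ℝ (Fin N) →L[ℝ] EuclideanSpace ℝ (Fin N) :=
      (D.comp P).flip (P w) with hNc
    have hNc_apply : ∀ b, Nc b = (D (P b)) (P w) := fun b => rfl
    have hQc_apply : ∀ b, Qc b = b - P b := fun b => by
      simp [hQc, ContinuousLinearMap.sub_apply]
    have hQsym : ∀ a b : EuclideanSpace ℝ (Fin N), ⟪Qc a, b⟫_ℝ = ⟪a, Qc b⟫_ℝ := by
      intro a b
      rw [hQc_apply, hQc_apply, inner_sub_left, inner_sub_right, hPsa]
    have hNQ : ∀ b, Nc (Qc b) = 0 := by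
      intro b
      rw [hNc_apply, hQc_apply, map_sub, hPP, sub_self, map_zero]
      simp
    have hterm : ∀ i : Fin N,
        ⟪P ((D (P (e i))) (e i)), w⟫_ℝ = ⟪Qc (e i), Nc (e i)⟫_ℝ := by
      intro i
      have hsplit : P ((D (P (e i))) (e i)) = P ((D (P (e i))) (Qc (e i))) := by
        rw [hQc_apply, map_sub, map_sub, hPDP, sub_zero]
      rw [hsplit, hPsa, hDsa, hNc_apply]
    rw [hS, sum_inner]
    simp only [hterm]
    calc ∑ i, ⟪Qc (e i), Nc (e i)⟫_ℝ
        = ∑ i, ∑ j, ⟪e j, Nc (e i)⟫_ℝ * ⟪Qc (e i), e j⟫_ℝ := by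
          refine Finset.sum_congr rfl fun i _ => ?_
          conv_lhs => rw [← hrepr (Nc (e i))]
          rw [inner_sum]
          refine Finset.sum_congr rfl fun j _ => ?_
          rw [real_inner_smul_right]
      _ = ∑ j, ∑ i, ⟪e j, Nc (e i)⟫_ℝ * ⟪Qc (e i), e j⟫_ℝ := Finset.sum_comm
      _ = ∑ j, ⟪e j, Nc (Qc (e j))⟫_ℝ := by
          refine Finset.sum_congr rfl fun j _ => ?_
          conv_rhs => rw [← hrepr (Qc (e j)), map_sum]
          rw [inner_sum]
          refine Finset.sum_congr rfl fun i _ => ?_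
          rw [map_smul, real_inner_smul_right, hQsym, mul_comm]
      _ = 0 := by
          refine Finset.sum_eq_zero fun j _ => ?_
          rw [hNQ]
          simp
  have : ⟪S, S⟫_ℝ = 0 := hSw S
  exact inner_self_eq_zero.mp this
end

section
/- Let U ⊆ ℝ^N be open, P̃ : U → (ℝ^N →L[ℝ] ℝ^N) continuously differentiable with each P̃(y) an orthogonal projection, and let f : U → ℝ be twice continuously differentiable. Define X_i f : U → ℝ by (X_i f)(y) := (fderiv ℝ f y)(P̃(y) e_i), and the leafwise Laplacian Δ_E f(x) := ∑_{j=1}^N ⟨(fderiv ℝ (y ↦ P̃(y)(gradient f y)) x)(P̃(x) e_j), P̃(x) e_j⟩ (the leafwise divergence of the leafwise gradient field y ↦ P̃(y)(gradient f y)). Then for every x ∈ U, Δ_E f(x) = ∑_{i=1}^N (fderiv ℝ (X_i f) x)(P̃(x) e_i), i.e. Δ_E f = ∑_i X_i(X_i f). -/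
open scoped InnerProductSpace

/-- Embedded form of Lemma 2.2(c): the leafwise Laplacian (the leafwise divergence of the
leafwise gradient field `y ↦ Pt y (gradient f y)`) equals the sum of squares of the
projected gradient vector fields `Xᵢ(y) = Pt y eᵢ`, i.e. `Δ_E f = ∑ i Xᵢ(Xᵢ f)`.
Here `Pt` plays the role of `P̃`, a C¹ family of orthogonal projections on the open set
`U`, and `f` is C² on `U`. -/
theorem leafwise_laplacian_eq_sum_squares {N : ℕ}
    (U : Set (EuclideanSpace ℝ (Fin N))) (hU : IsOpen U)
    (Pt : EuclideanSpace ℝ (Fin N) → (EuclideanSpace ℝ (Fin N) →L[ℝ] EuclideanSpace ℝ (Fin N)))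
    (hP : ContDiffOn ℝ 1 Pt U)
    (hsa : ∀ y ∈ U, ∀ v w : EuclideanSpace ℝ (Fin N), ⟪Pt y v, w⟫_ℝ = ⟪v, Pt y w⟫_ℝ)
    (hidem : ∀ y ∈ U, ∀ v : EuclideanSpace ℝ (Fin N), Pt y (Pt y v) = Pt y v)
    (f : EuclideanSpace ℝ (Fin N) → ℝ) (hf : ContDiffOn ℝ 2 f U)
    (x : EuclideanSpace ℝ (Fin N)) (hx : x ∈ U) :
    ∑ j : Fin N,
        ⟪(fderiv ℝ (fun y => Pt y (gradient f y)) x) (Pt x (EuclideanSpace.single j (1 : ℝ))),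
          Pt x (EuclideanSpace.single j (1 : ℝ))⟫_ℝ
      = ∑ i : Fin N,
          (fderiv ℝ (fun y => fderiv ℝ f y (Pt y (EuclideanSpace.single i (1 : ℝ)))) x)
            (Pt x (EuclideanSpace.single i (1 : ℝ))) := by
  set e : Fin N → EuclideanSpace ℝ (Fin N) := fun i => EuclideanSpace.single i (1 : ℝ) with he
  have hmem : U ∈ nhds x := hU.mem_nhds hx
  -- the gradient is C¹ on U
  have hfd : ContDiffOn ℝ 1 (fderiv ℝ f) U := hf.fderiv_of_isOpen (m := 1) hU (by norm_num)
  have hgrad : ContDiffOn ℝ 1 (fun y => gradient f y) U := by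
    have : (fun y => gradient f y)
        = fun y => (InnerProductSpace.toDual ℝ (EuclideanSpace ℝ (Fin N))).symm (fderiv ℝ f y) := rfl
    rw [this]
    exact (InnerProductSpace.toDual ℝ (EuclideanSpace ℝ (Fin N))).symm.contDiff.comp_contDiffOn hfd
  -- the leafwise gradient field
  set F : EuclideanSpace ℝ (Fin N) → EuclideanSpace ℝ (Fin N) := fun y => Pt y (gradient f y) with hFdef
  have hFc : ContDiffOn ℝ 1 F U := hP.clm_apply hgrad
  have hFx : DifferentiableAt ℝ F x :=
    ((hFc.differentiableOn one_ne_zero).differentiableAt hmem)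
  set A : EuclideanSpace ℝ (Fin N) →L[ℝ] EuclideanSpace ℝ (Fin N) := fderiv ℝ F x with hA
  set P : EuclideanSpace ℝ (Fin N) →L[ℝ] EuclideanSpace ℝ (Fin N) := Pt x with hPx
  -- rewrite each RHS summand as ⟪A (P (e i)), e i⟫
  have hrhs : ∀ i : Fin N,
      (fderiv ℝ (fun y => fderiv ℝ f y (Pt y (e i))) x) (P (e i)) = ⟪A (P (e i)), e i⟫_ℝ := by
    intro i
    have hev : (fun y => fderiv ℝ f y (Pt y (e i))) =ᶠ[nhds x] (fun y => ⟪F y, e i⟫_ℝ) := by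
      filter_upwards [hmem] with y hy
      have h1 : fderiv ℝ f y (Pt y (e i)) = ⟪gradient f y, Pt y (e i)⟫_ℝ := by
        simp [gradient, InnerProductSpace.toDual_symm_apply]
      rw [h1, ← hsa y hy]
    rw [hev.fderiv_eq]
    have := fderiv_inner_apply ℝ hFx (differentiableAt_const (e i)) (P (e i))
    rw [this]
    simp [real_inner_comm, hA]
  -- rewrite each LHS summand
  have hlhs : ∀ j : Fin N, ⟪A (P (e j)), P (e j)⟫_ℝ = ∑ k, (A (P (e j))) k * (P (e k)) j := by
    intro j
    rw [PiLp.inner_apply]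
    refine Finset.sum_congr rfl fun k _ => ?_
    have hsym : (P (e j)) k = (P (e k)) j := by
      have h1 : (P (e j)) k = ⟪P (e j), e k⟫_ℝ := by
        simp [he, EuclideanSpace.inner_single_right]
      have h2 : (P (e k)) j = ⟪e j, P (e k)⟫_ℝ := by
        simp [he, EuclideanSpace.inner_single_left]
      rw [h1, h2, hsa x hx]
    simp [hsym, mul_comm]
  -- decomposition of a vector in the standard basis
  have hdecomp : ∀ u : EuclideanSpace ℝ (Fin N), u = ∑ j, (u j) • e j := by
    intro u
    ext k
    rw [WithLp.ofLp_sum, Finset.sum_apply]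
    simp [he, EuclideanSpace.single_apply]
  -- the key trace identity
  have key : ∀ k : Fin N, ∑ j, (A (P (e j))) k * (P (e k)) j = (A (P (e k))) k := by
    intro k
    have hlin : A (P (∑ j, ((P (e k)) j) • e j)) = ∑ j, ((P (e k)) j) • A (P (e j)) := by
      rw [map_sum, map_sum]
      simp
    have h2 : A (P (P (e k))) = ∑ j, ((P (e k)) j) • A (P (e j)) := by
      rw [← hlin, ← hdecomp (P (e k))]
    have h3 : A (P (e k)) = ∑ j, ((P (e k)) j) • A (P (e j)) := by
      rw [← h2]
      congr 1
      exact (hidem x hx (e k)).symm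
    calc ∑ j, (A (P (e j))) k * (P (e k)) j
        = (∑ j, ((P (e k)) j) • A (P (e j))) k := by
          rw [WithLp.ofLp_sum, Finset.sum_apply]
          exact Finset.sum_congr rfl fun j _ => (mul_comm _ _)
      _ = (A (P (e k))) k := by rw [← h3]
  calc ∑ j : Fin N, ⟪A (P (e j)), P (e j)⟫_ℝ
      = ∑ j, ∑ k, (A (P (e j))) k * (P (e k)) j := Finset.sum_congr rfl fun j _ => hlhs j
    _ = ∑ k, ∑ j, (A (P (e j))) k * (P (e k)) j := Finset.sum_comm
    _ = ∑ k, (A (P (e k))) k := Finset.sum_congr rfl fun k _ => key k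
    _ = ∑ i, ⟪A (P (e i)), e i⟫_ℝ := by
        refine Finset.sum_congr rfl fun i _ => ?_
        simp [he, EuclideanSpace.inner_single_right]
    _ = ∑ i : Fin N,
          (fderiv ℝ (fun y => fderiv ℝ f y (Pt y (e i))) x) (P (e i)) :=
        (Finset.sum_congr rfl fun i _ => (hrhs i).symm)
end

section
/- Let U ⊆ ℝ^N be open and P̃ : U → (ℝ^N →L[ℝ] ℝ^N) differentiable at x ∈ U with each P̃(y) an orthogonal projection. Define the mean curvature vector H(x) := −∑_{j=1}^N (fderiv ℝ P̃ x (P̃(x) e_j))(P̃(x) e_j). Then: (i) P̃(x) H(x) = 0 (the mean curvature is normal to the leaf), and (ii) for every v ∈ ℝ^N, the leafwise divergence of the field y ↦ P̃(y) v satisfies ∑_{j=1}^N ⟨(fderiv ℝ (y ↦ P̃(y) v) x)(P̃(x) e_j), P̃(x) e_j⟩ = −⟨H(x), v⟩. -/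
open scoped InnerProductSpace

/-- Embedded form of Lemma 3.1: with the mean curvature vector
`H x = −∑ j (fderiv ℝ Pt x (Pt x eⱼ))(Pt x eⱼ)` of the leaves of a family `Pt`
(playing the role of `P̃`) of orthogonal projections, one has
(i) `Pt x (H x) = 0`, and (ii) for every `v`, the leafwise divergence of `y ↦ Pt y v`
equals `−⟪H x, v⟫`. -/
theorem mean_curvature_normal_and_div_proj {N : ℕ}
    (U : Set (EuclideanSpace ℝ (Fin N))) (hU : IsOpen U)
    (Pt : EuclideanSpace ℝ (Fin N) → (EuclideanSpace ℝ (Fin N) →L[ℝ] EuclideanSpace ℝ (Fin N)))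
    (x : EuclideanSpace ℝ (Fin N)) (hx : x ∈ U)
    (hdiff : DifferentiableAt ℝ Pt x)
    (hsa : ∀ y ∈ U, ∀ v w : EuclideanSpace ℝ (Fin N), ⟪Pt y v, w⟫_ℝ = ⟪v, Pt y w⟫_ℝ)
    (hidem : ∀ y ∈ U, ∀ v : EuclideanSpace ℝ (Fin N), Pt y (Pt y v) = Pt y v)
    (H : EuclideanSpace ℝ (Fin N))
    (hH : H = -∑ j : Fin N, (fderiv ℝ Pt x (Pt x (EuclideanSpace.single j (1 : ℝ))))
        (Pt x (EuclideanSpace.single j (1 : ℝ)))) :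
    Pt x H = 0 ∧
      ∀ v : EuclideanSpace ℝ (Fin N),
        ∑ j : Fin N, ⟪(fderiv ℝ (fun y => Pt y v) x) (Pt x (EuclideanSpace.single j (1 : ℝ))),
            Pt x (EuclideanSpace.single j (1 : ℝ))⟫_ℝ
          = -⟪H, v⟫_ℝ := by
  have hxU : U ∈ nhds x := hU.mem_nhds hx
  set P : EuclideanSpace ℝ (Fin N) →L[ℝ] EuclideanSpace ℝ (Fin N) := Pt x with hP
  set D := fderiv ℝ Pt x with hD
  -- derivative of y ↦ Pt y v
  have hder : ∀ v : EuclideanSpace ℝ (Fin N), HasFDerivAt (fun y => Pt y v)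
      ((ContinuousLinearMap.apply ℝ (EuclideanSpace ℝ (Fin N)) v).comp D) x :=
    fun v => (ContinuousLinearMap.apply ℝ (EuclideanSpace ℝ (Fin N)) v).hasFDerivAt.comp x hdiff.hasFDerivAt
  have hderiv_eq : ∀ v : EuclideanSpace ℝ (Fin N), fderiv ℝ (fun y => Pt y v) x
      = (ContinuousLinearMap.apply ℝ (EuclideanSpace ℝ (Fin N)) v).comp D := fun v => (hder v).fderiv
  -- self-adjointness of D w
  have hDsa : ∀ w v u : EuclideanSpace ℝ (Fin N), ⟪D w v, u⟫_ℝ = ⟪v, D w u⟫_ℝ := by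
    intro w v u
    have h1 : HasFDerivAt (fun y => ⟪u, Pt y v⟫_ℝ)
        ((innerSL ℝ u).comp ((ContinuousLinearMap.apply ℝ (EuclideanSpace ℝ (Fin N)) v).comp D)) x :=
      (innerSL ℝ u).hasFDerivAt.comp x (hder v)
    have h2 : HasFDerivAt (fun y => ⟪v, Pt y u⟫_ℝ)
        ((innerSL ℝ v).comp ((ContinuousLinearMap.apply ℝ (EuclideanSpace ℝ (Fin N)) u).comp D)) x :=
      (innerSL ℝ v).hasFDerivAt.comp x (hder u)
    have heq : (fun y => ⟪u, Pt y v⟫_ℝ) =ᶠ[nhds x] (fun y => ⟪v, Pt y u⟫_ℝ) := by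
      filter_upwards [hxU] with y hy
      rw [← hsa y hy u v, real_inner_comm, ← hsa y hy v u]
    have := h1.fderiv ▸ h2.fderiv ▸ heq.fderiv_eq
    have h3 := congrFun (congrArg DFunLike.coe this) w
    simp only [ContinuousLinearMap.coe_comp', Function.comp_apply,
      ContinuousLinearMap.apply_apply, innerSL_apply_apply] at h3
    rw [real_inner_comm]
    exact h3
  -- differentiate idempotency : D w (P v) + P (D w v) = D w v
  have hkey : ∀ w v : EuclideanSpace ℝ (Fin N), D w (P v) + P (D w v) = D w v := by
    intro w v
    have h1 : HasFDerivAt (fun y => Pt y (Pt y v))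
        (P.comp ((ContinuousLinearMap.apply ℝ (EuclideanSpace ℝ (Fin N)) v).comp D)
          + D.flip (P v)) x := hdiff.hasFDerivAt.clm_apply (hder v)
    have heq : (fun y => Pt y (Pt y v)) =ᶠ[nhds x] (fun y => Pt y v) := by
      filter_upwards [hxU] with y hy
      exact hidem y hy v
    have := h1.fderiv ▸ (hderiv_eq v) ▸ heq.fderiv_eq
    have h3 := congrFun (congrArg DFunLike.coe this) w
    simp only [ContinuousLinearMap.add_apply, ContinuousLinearMap.coe_comp',
      Function.comp_apply, ContinuousLinearMap.apply_apply,
      ContinuousLinearMap.flip_apply] at h3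
    linear_combination (norm := module) h3
  have hPP : ∀ v : EuclideanSpace ℝ (Fin N), P (P v) = P v := hidem x hx
  -- P (D w (P e_j)) = 0
  have hnorm : ∀ w j, P (D w (P (EuclideanSpace.single j (1 : ℝ)))) = 0 := by
    intro w j
    have := hkey w (P (EuclideanSpace.single j (1 : ℝ)))
    rw [hPP] at this
    linear_combination (norm := module) this
  constructor
  · rw [hH]
    rw [map_neg, map_sum]
    rw [Finset.sum_congr rfl fun j _ => hnorm (P (EuclideanSpace.single j (1 : ℝ))) j]
    simp
  · intro v
    rw [hH]
    calc ∑ j : Fin N, ⟪(fderiv ℝ (fun y => Pt y v) x) (Pt x (EuclideanSpace.single j (1 : ℝ))),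
            Pt x (EuclideanSpace.single j (1 : ℝ))⟫_ℝ
        = ∑ j : Fin N, ⟪v, D (P (EuclideanSpace.single j (1 : ℝ)))
            (P (EuclideanSpace.single j (1 : ℝ)))⟫_ℝ := by
          refine Finset.sum_congr rfl fun j _ => ?_
          rw [hderiv_eq v]
          simp only [ContinuousLinearMap.coe_comp', Function.comp_apply,
            ContinuousLinearMap.apply_apply]
          exact hDsa _ _ _
      _ = ⟪v, ∑ j : Fin N, D (P (EuclideanSpace.single j (1 : ℝ)))
            (P (EuclideanSpace.single j (1 : ℝ)))⟫_ℝ := by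
          rw [inner_sum]
      _ = _ := by rw [inner_neg_left, neg_neg, real_inner_comm]
end

section
/- Let U ⊆ ℝ^N be open and P̃ : U → (ℝ^N →L[ℝ] ℝ^N) differentiable at x ∈ U with each P̃(y) an orthogonal projection. Let X_i(y) := P̃(y) e_i and div_E X_i(x) := ∑_{j=1}^N ⟨(fderiv ℝ X_i x)(P̃(x) e_j), P̃(x) e_j⟩. Then ∑_{i=1}^N (div_E X_i(x)) • X_i(x) = 0. -/
open scoped InnerProductSpace

/-- Formula (2) of Corollary 3.2: `∑ i div_E(Xᵢ) Xᵢ = 0` for the projected gradient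
fields `Xᵢ(y) = Pt y eᵢ` of a family `Pt` (playing the role of `P̃`) of orthogonal
projections, where `div_E Xᵢ (x) = ∑ j ⟪(fderiv ℝ Xᵢ x)(Pt x eⱼ), Pt x eⱼ⟫`. -/
theorem sum_divE_smul_X_eq_zero {N : ℕ}
    (U : Set (EuclideanSpace ℝ (Fin N))) (hU : IsOpen U)
    (Pt : EuclideanSpace ℝ (Fin N) → (EuclideanSpace ℝ (Fin N) →L[ℝ] EuclideanSpace ℝ (Fin N)))
    (x : EuclideanSpace ℝ (Fin N)) (hx : x ∈ U)
    (hdiff : DifferentiableAt ℝ Pt x)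
    (hsa : ∀ y ∈ U, ∀ v w : EuclideanSpace ℝ (Fin N), ⟪Pt y v, w⟫_ℝ = ⟪v, Pt y w⟫_ℝ)
    (hidem : ∀ y ∈ U, ∀ v : EuclideanSpace ℝ (Fin N), Pt y (Pt y v) = Pt y v) :
    ∑ i : Fin N,
        (∑ j : Fin N,
          ⟪(fderiv ℝ (fun y => Pt y (EuclideanSpace.single i (1 : ℝ))) x)
              (Pt x (EuclideanSpace.single j (1 : ℝ))),
            Pt x (EuclideanSpace.single j (1 : ℝ))⟫_ℝ)
          • Pt x (EuclideanSpace.single i (1 : ℝ))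
      = 0 := by
  have hmem : U ∈ nhds x := hU.mem_nhds hx
  set P := Pt x with hP
  set D := fderiv ℝ Pt x with hD
  set e : Fin N → EuclideanSpace ℝ (Fin N) := fun i => EuclideanSpace.single i (1 : ℝ) with he
  -- Step 1: derivative of y ↦ Pt y v
  have h1 : ∀ v : EuclideanSpace ℝ (Fin N),
      fderiv ℝ (fun y => Pt y v) x = D.flip v := by
    intro v
    have := fderiv_clm_apply hdiff (differentiableAt_const v)
    simpa using this
  -- Step 2: differentiate idempotency
  have h2 : ∀ u v : EuclideanSpace ℝ (Fin N), D u (P v) + P (D u v) = D u v := by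
    intro u v
    have hdv : DifferentiableAt ℝ (fun y => Pt y v) x :=
      hdiff.clm_apply (differentiableAt_const v)
    have hev : (fun y => Pt y (Pt y v)) =ᶠ[nhds x] fun y => Pt y v :=
      Filter.eventuallyEq_of_mem hmem (fun y hy => hidem y hy v)
    have hf : fderiv ℝ (fun y => Pt y (Pt y v)) x = fderiv ℝ (fun y => Pt y v) x :=
      hev.fderiv_eq
    have hc := fderiv_clm_apply hdiff hdv
    rw [hf, h1 v] at hc
    have hc' := congrArg (fun T : EuclideanSpace ℝ (Fin N) →L[ℝ] EuclideanSpace ℝ (Fin N) => T u) hc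
    simp [ContinuousLinearMap.comp_apply, h1 v] at hc'
    -- hc' : D u v = P (D u v) + D u (P v)  (some order)
    linear_combination (norm := module) hc'.symm
  -- P is self-adjoint
  have hPadj : ContinuousLinearMap.adjoint P = P := by
    exact ((ContinuousLinearMap.eq_adjoint_iff P P).mpr (hsa x hx)).symm
  -- key vanishing
  have key : ∀ j : Fin N,
      P ((ContinuousLinearMap.adjoint (D (P (e j)))) (P (e j))) = 0 := by
    intro j
    set A := D (P (e j)) with hA
    have hcomp : A.comp P + P.comp A = A := by
      refine ContinuousLinearMap.ext fun v => ?_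
      simpa using h2 (P (e j)) v
    have hadj := congrArg ContinuousLinearMap.adjoint hcomp
    rw [map_add, ContinuousLinearMap.adjoint_comp, ContinuousLinearMap.adjoint_comp, hPadj] at hadj
    have := congrArg (fun T : EuclideanSpace ℝ (Fin N) →L[ℝ] EuclideanSpace ℝ (Fin N) => T (P (e j))) hadj
    simp [ContinuousLinearMap.comp_apply, hidem x hx (e j)] at this
    rw [show P (P (e j)) = P (e j) from hidem x hx (e j)] at this
    linear_combination (norm := module) this
  -- assemble
  set w : EuclideanSpace ℝ (Fin N) :=
    ∑ j : Fin N, (ContinuousLinearMap.adjoint (D (P (e j)))) (P (e j)) with hw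
  have hPw : P w = 0 := by
    rw [hw, map_sum]
    exact Finset.sum_eq_zero fun j _ => key j
  have hci : ∀ i : Fin N,
      (∑ j : Fin N, ⟪(fderiv ℝ (fun y => Pt y (e i)) x) (P (e j)), P (e j)⟫_ℝ)
        = ⟪e i, w⟫_ℝ := by
    intro i
    rw [hw, inner_sum]
    refine Finset.sum_congr rfl fun j _ => ?_
    rw [h1 (e i), ContinuousLinearMap.adjoint_inner_right]
    rfl
  calc ∑ i : Fin N,
        (∑ j : Fin N,
          ⟪(fderiv ℝ (fun y => Pt y (e i)) x) (P (e j)), P (e j)⟫_ℝ) • P (e i)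
      = ∑ i : Fin N, ⟪e i, w⟫_ℝ • P (e i) := by
        refine Finset.sum_congr rfl fun i _ => by rw [hci i]
    _ = P (∑ i : Fin N, ⟪e i, w⟫_ℝ • e i) := by
        rw [map_sum]; refine Finset.sum_congr rfl fun i _ => (P.map_smul _ _).symm
    _ = P w := by
        congr 1
        have hb : ∀ i, (EuclideanSpace.basisFun (Fin N) ℝ) i = e i := by
          intro i; rw [he]; exact EuclideanSpace.basisFun_apply (Fin N) ℝ i
        have := (EuclideanSpace.basisFun (Fin N) ℝ).sum_repr' w
        simp only [hb] at this
        exact this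
    _ = 0 := hPw
end

section
/- Let U ⊆ ℝ^N be open and P̃ : U → (ℝ^N →L[ℝ] ℝ^N) twice continuously differentiable with each P̃(y) an orthogonal projection. Let X_i(y) := P̃(y) e_i, let f_i : U → ℝ be the function f_i(y) := ∑_{j=1}^N ⟨(fderiv ℝ X_i y)(P̃(y) e_j), P̃(y) e_j⟩ (the leafwise divergence of X_i), and let H(x) := −∑_{j=1}^N (fderiv ℝ P̃ x (P̃(x) e_j))(P̃(x) e_j) be the mean curvature vector. Then for every x ∈ U, ‖H(x)‖² = −∑_{i=1}^N (fderiv ℝ f_i x)(X_i(x)). -/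
open scoped InnerProductSpace
open Filter

private lemma euclid_eq_sum_single' {N : ℕ} (v : EuclideanSpace ℝ (Fin N)) :
    v = ∑ j, v j • EuclideanSpace.single j (1:ℝ) := by
  ext k
  rw [WithLp.ofLp_sum, Finset.sum_apply]
  simp [EuclideanSpace.single_apply]

private lemma clm_apply_expand' {N : ℕ}
    (T : EuclideanSpace ℝ (Fin N) →L[ℝ] EuclideanSpace ℝ (Fin N))
    (v : EuclideanSpace ℝ (Fin N)) :
    T v = ∑ j, v j • T (EuclideanSpace.single j (1:ℝ)) := by
  conv_lhs => rw [euclid_eq_sum_single' v]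
  rw [map_sum]
  simp

private lemma trace_swap' {N : ℕ}
    (S A : EuclideanSpace ℝ (Fin N) →L[ℝ] EuclideanSpace ℝ (Fin N))
    (hS : ∀ v w, ⟪S v, w⟫_ℝ = ⟪v, S w⟫_ℝ) :
    ∑ i, ⟪EuclideanSpace.single i (1:ℝ), A (S (EuclideanSpace.single i 1))⟫_ℝ
      = ∑ i, ⟪EuclideanSpace.single i (1:ℝ), S (A (EuclideanSpace.single i 1))⟫_ℝ := by
  have hsym : ∀ i j, S (EuclideanSpace.single i (1:ℝ)) j
      = S (EuclideanSpace.single j (1:ℝ)) i := by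
    intro i j
    have h := hS (EuclideanSpace.single i (1:ℝ)) (EuclideanSpace.single j (1:ℝ))
    simpa [EuclideanSpace.inner_single_left, EuclideanSpace.inner_single_right] using h
  calc ∑ i, ⟪EuclideanSpace.single i (1:ℝ), A (S (EuclideanSpace.single i 1))⟫_ℝ
      = ∑ i, ∑ j, S (EuclideanSpace.single i (1:ℝ)) j
          * A (EuclideanSpace.single j (1:ℝ)) i := by
        refine Finset.sum_congr rfl fun i _ => ?_
        rw [clm_apply_expand' A (S (EuclideanSpace.single i 1)), inner_sum]
        simp [EuclideanSpace.inner_single_left, real_inner_smul_right]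
    _ = ∑ i, ∑ j, S (EuclideanSpace.single j (1:ℝ)) i
          * A (EuclideanSpace.single j (1:ℝ)) i := by
        refine Finset.sum_congr rfl fun i _ => Finset.sum_congr rfl fun j _ => ?_
        rw [hsym]
    _ = ∑ j, ∑ i, S (EuclideanSpace.single j (1:ℝ)) i
          * A (EuclideanSpace.single j (1:ℝ)) i := Finset.sum_comm
    _ = ∑ i, ⟪EuclideanSpace.single i (1:ℝ), S (A (EuclideanSpace.single i 1))⟫_ℝ := by
        refine Finset.sum_congr rfl fun j _ => ?_
        rw [clm_apply_expand' S (A (EuclideanSpace.single j 1)), inner_sum]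
        simp [EuclideanSpace.inner_single_left, real_inner_smul_right]
        refine Finset.sum_congr rfl fun i _ => ?_
        rw [hsym]; ring

set_option maxHeartbeats 1600000 in
/-- Formula (3) of Corollary 3.2: `‖H‖² = −∑ i Xᵢ(div_E Xᵢ)` for the projected gradient
fields `Xᵢ(y) = Pt y eᵢ` of a C² family `Pt` (playing the role of `P̃`) of orthogonal
projections on the open set `U`, where `fᵢ = div_E Xᵢ` is the leafwise divergence and
`H x = −∑ j (fderiv ℝ Pt x (Pt x eⱼ))(Pt x eⱼ)` is the mean curvature vector. -/
theorem normSq_meanCurvature_eq_neg_sum {N : ℕ}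
    (U : Set (EuclideanSpace ℝ (Fin N))) (hU : IsOpen U)
    (Pt : EuclideanSpace ℝ (Fin N) → (EuclideanSpace ℝ (Fin N) →L[ℝ] EuclideanSpace ℝ (Fin N)))
    (hP : ContDiffOn ℝ 2 Pt U)
    (hsa : ∀ y ∈ U, ∀ v w : EuclideanSpace ℝ (Fin N), ⟪Pt y v, w⟫_ℝ = ⟪v, Pt y w⟫_ℝ)
    (hidem : ∀ y ∈ U, ∀ v : EuclideanSpace ℝ (Fin N), Pt y (Pt y v) = Pt y v)
    (X : Fin N → EuclideanSpace ℝ (Fin N) → EuclideanSpace ℝ (Fin N))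
    (hX : ∀ i y, X i y = Pt y (EuclideanSpace.single i (1 : ℝ)))
    (f : Fin N → EuclideanSpace ℝ (Fin N) → ℝ)
    (hf : ∀ i y, f i y = ∑ j : Fin N,
        ⟪(fderiv ℝ (X i) y) (Pt y (EuclideanSpace.single j (1 : ℝ))),
          Pt y (EuclideanSpace.single j (1 : ℝ))⟫_ℝ)
    (H : EuclideanSpace ℝ (Fin N) → EuclideanSpace ℝ (Fin N))
    (hH : ∀ y, H y = -∑ j : Fin N,
        (fderiv ℝ Pt y (Pt y (EuclideanSpace.single j (1 : ℝ))))
          (Pt y (EuclideanSpace.single j (1 : ℝ))))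
    (x : EuclideanSpace ℝ (Fin N)) (hx : x ∈ U) :
    ‖H x‖ ^ 2 = -∑ i : Fin N, (fderiv ℝ (f i) x) (X i x) := by
  classical
  set e : Fin N → EuclideanSpace ℝ (Fin N) := fun i => EuclideanSpace.single i (1:ℝ) with he
  have hPd : ∀ y ∈ U, DifferentiableAt ℝ Pt y := fun y hy =>
    (hP.contDiffAt (hU.mem_nhds hy)).differentiableAt two_ne_zero
  have hP'c : ContDiffOn ℝ 1 (fun y => fderiv ℝ Pt y) U :=
    hP.fderiv_of_isOpen hU (by norm_num)
  have hPt1 : ContDiffOn ℝ 1 Pt U := hP.of_le one_le_two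
  -- derivative of z ↦ Pt z v
  have hfa : ∀ y ∈ U, ∀ v : EuclideanSpace ℝ (Fin N),
      fderiv ℝ (fun z => Pt z v) y = (fderiv ℝ Pt y).flip v := by
    intro y hy v
    rw [fderiv_clm_apply (hPd y hy) (differentiableAt_const v)]
    simp
  -- differentiating idempotency
  have hi : ∀ y ∈ U, ∀ u v : EuclideanSpace ℝ (Fin N),
      Pt y (fderiv ℝ Pt y u v) + fderiv ℝ Pt y u (Pt y v) = fderiv ℝ Pt y u v := by
    intro y hy u v
    have hPv : DifferentiableAt ℝ (fun z => Pt z v) y :=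
      (hPd y hy).clm_apply (differentiableAt_const v)
    have h1 : (fun z => Pt z (Pt z v)) =ᶠ[nhds y] (fun z => Pt z v) := by
      filter_upwards [hU.mem_nhds hy] with z hz using hidem z hz v
    have h2 := h1.fderiv_eq (𝕜 := ℝ)
    rw [fderiv_clm_apply (hPd y hy) hPv, hfa y hy v] at h2
    have h3 := congrArg (fun L => L u) h2
    simpa using h3
  -- P ∘ D u ∘ P = 0
  have hPDP : ∀ y ∈ U, ∀ u v : EuclideanSpace ℝ (Fin N),
      Pt y (fderiv ℝ Pt y u (Pt y v)) = 0 := by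
    intro y hy u v
    have h := congrArg (Pt y) (hi y hy u v)
    rw [map_add, hidem y hy] at h
    exact (add_eq_left).mp h
  -- self-adjointness of the derivative
  have hsa' : ∀ y ∈ U, ∀ u v w : EuclideanSpace ℝ (Fin N),
      ⟪fderiv ℝ Pt y u v, w⟫_ℝ = ⟪v, fderiv ℝ Pt y u w⟫_ℝ := by
    intro y hy u v w
    have hPv : DifferentiableAt ℝ (fun z => Pt z v) y :=
      (hPd y hy).clm_apply (differentiableAt_const v)
    have hPw : DifferentiableAt ℝ (fun z => Pt z w) y :=
      (hPd y hy).clm_apply (differentiableAt_const w)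
    have hL : fderiv ℝ (fun z => ⟪Pt z v, w⟫_ℝ) y u = ⟪fderiv ℝ Pt y u v, w⟫_ℝ := by
      rw [fderiv_inner_apply (𝕜 := ℝ) hPv (differentiableAt_const w) u, hfa y hy v]
      simp
    have hR : fderiv ℝ (fun z => ⟪v, Pt z w⟫_ℝ) y u = ⟪v, fderiv ℝ Pt y u w⟫_ℝ := by
      rw [fderiv_inner_apply (𝕜 := ℝ) (differentiableAt_const v) hPw u, hfa y hy w]
      simp
    have h1 : (fun z => ⟪Pt z v, w⟫_ℝ) =ᶠ[nhds y] (fun z => ⟪v, Pt z w⟫_ℝ) := by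
      filter_upwards [hU.mem_nhds hy] with z hz using hsa z hz v w
    rw [← hL, ← hR, h1.fderiv_eq (𝕜 := ℝ)]
  -- smoothness of H
  have hHc : ContDiffOn ℝ 1 H U := by
    have hbase : ContDiffOn ℝ 1
        (fun y => -∑ j : Fin N, fderiv ℝ Pt y (Pt y (e j)) (Pt y (e j))) U := by
      apply ContDiffOn.neg
      apply ContDiffOn.sum
      intro j _
      exact (hP'c.clm_apply (hPt1.clm_apply contDiffOn_const)).clm_apply
        (hPt1.clm_apply contDiffOn_const)
    exact hbase.congr fun y _ => hH y
  have hHd : DifferentiableAt ℝ H x :=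
    (hHc.contDiffAt (hU.mem_nhds hx)).differentiableAt one_ne_zero
  -- H is normal: Pt y (H y) = 0 on U
  have hPH : ∀ y ∈ U, Pt y (H y) = 0 := by
    intro y hy
    rw [hH y, map_neg, map_sum]
    rw [Finset.sum_congr rfl fun j _ => hPDP y hy (Pt y (e j)) (e j)]
    simp
  -- differentiate normality: P (H' v) = - (D v) (H x)
  have hdH : ∀ v : EuclideanSpace ℝ (Fin N),
      Pt x (fderiv ℝ H x v) + fderiv ℝ Pt x v (H x) = 0 := by
    intro v
    have h1 : (fun z => Pt z (H z)) =ᶠ[nhds x] (fun _ => (0 : EuclideanSpace ℝ (Fin N))) := by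
      filter_upwards [hU.mem_nhds hx] with z hz using hPH z hz
    have h2 := h1.fderiv_eq (𝕜 := ℝ)
    rw [fderiv_clm_apply (hPd x hx) hHd, fderiv_const_apply] at h2
    have h3 := congrArg (fun L => L v) h2
    simpa using h3
  -- f i equals -⟪e i, H⟫ on U
  have hfH : ∀ i, ∀ y ∈ U, f i y = -⟪e i, H y⟫_ℝ := by
    intro i y hy
    have hXd : fderiv ℝ (X i) y = (fderiv ℝ Pt y).flip (e i) := by
      have hXe : X i = fun z => Pt z (e i) := funext fun z => hX i z
      rw [hXe, hfa y hy (e i)]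
    rw [hf, hH y, inner_neg_right, neg_neg, inner_sum]
    refine Finset.sum_congr rfl fun j _ => ?_
    rw [hXd]
    rw [ContinuousLinearMap.flip_apply]
    exact hsa' y hy (Pt y (e j)) (e i) (Pt y (e j))
  -- compute fderiv (f i) x applied to X i x
  have hfd : ∀ i, (fderiv ℝ (f i) x) (X i x)
      = -⟪e i, fderiv ℝ H x (Pt x (e i))⟫_ℝ := by
    intro i
    have h1 : f i =ᶠ[nhds x] (fun y => -⟪e i, H y⟫_ℝ) := by
      filter_upwards [hU.mem_nhds hx] with z hz using hfH i z hz
    rw [h1.fderiv_eq (𝕜 := ℝ), fderiv_fun_neg (𝕜 := ℝ), ContinuousLinearMap.neg_apply,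
      hX i x, fderiv_inner_apply (𝕜 := ℝ) (differentiableAt_const (e i)) hHd]
    simp; rfl
  -- reduce the goal
  rw [Finset.sum_congr rfl fun i _ => hfd i]
  rw [Finset.sum_neg_distrib, neg_neg]
  -- now pure linear algebra at x
  set P : EuclideanSpace ℝ (Fin N) →L[ℝ] EuclideanSpace ℝ (Fin N) := Pt x with hPdef
  set L : EuclideanSpace ℝ (Fin N) →L[ℝ] EuclideanSpace ℝ (Fin N) := fderiv ℝ H x with hLdef
  set D : EuclideanSpace ℝ (Fin N) →L[ℝ]
      (EuclideanSpace ℝ (Fin N) →L[ℝ] EuclideanSpace ℝ (Fin N)) := fderiv ℝ Pt x with hDdef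
  have hsax : ∀ v w, ⟪P v, w⟫_ℝ = ⟪v, P w⟫_ℝ := hsa x hx
  have hsax' : ∀ u v w, ⟪D u v, w⟫_ℝ = ⟪v, D u w⟫_ℝ := hsa' x hx
  have hidemx : ∀ v, P (P v) = P v := hidem x hx
  have hix : ∀ u v, P (D u v) + D u (P v) = D u v := hi x hx
  have hPHx : P (H x) = 0 := hPH x hx
  -- Step A: trace swap with L and P
  have stepA : ∑ i, ⟪e i, L (P (e i))⟫_ℝ = ∑ i, ⟪e i, P (L (e i))⟫_ℝ :=
    trace_swap' P L hsax
  -- B1 : second-slot normal components vanish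
  have hB1 : ∀ u v, ⟪D u (v - P v), H x⟫_ℝ = 0 := by
    intro u v
    have hkey : D u (v - P v) = P (D u v) := by
      have h := hix u v
      rw [map_sub]
      linear_combination (norm := abel) -h
    rw [hkey, hsax (D u v) (H x), hPHx, inner_zero_right]
  -- B2 : the mixed trace vanishes
  have hB2 : ∑ i, ⟪D (e i - P (e i)) (P (e i)), H x⟫_ℝ = 0 := by
    set A : EuclideanSpace ℝ (Fin N) →L[ℝ] EuclideanSpace ℝ (Fin N) :=
      P.comp (D.flip (H x)) with hAdef
    set S : EuclideanSpace ℝ (Fin N) →L[ℝ] EuclideanSpace ℝ (Fin N) :=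
      ContinuousLinearMap.id ℝ (EuclideanSpace ℝ (Fin N)) - P with hSdef
    have hSapp : ∀ v, S v = v - P v := by
      intro v; simp [hSdef]
    have hAapp : ∀ v, A v = P (D v (H x)) := by
      intro v; simp [hAdef]
    have hSsa : ∀ v w, ⟪S v, w⟫_ℝ = ⟪v, S w⟫_ℝ := by
      intro v w
      rw [hSapp, hSapp, inner_sub_left, inner_sub_right, hsax]
    have hterm : ∀ i, ⟪D (e i - P (e i)) (P (e i)), H x⟫_ℝ = ⟪e i, A (S (e i))⟫_ℝ := by
      intro i
      rw [hsax' (e i - P (e i)) (P (e i)) (H x), hsax (e i) (D (e i - P (e i)) (H x)),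
        hAapp, hSapp]
    rw [Finset.sum_congr rfl fun i _ => hterm i, trace_swap' S A hSsa]
    have hzero : ∀ i, S (A (e i)) = 0 := by
      intro i
      rw [hSapp, hAapp, hidemx, sub_self]
    rw [Finset.sum_congr rfl fun i _ => congrArg _ (hzero i)]
    simp
  -- Step C : tangential part gives the norm
  have hsumH : ∑ j, D (P (e j)) (P (e j)) = -(H x) := by
    rw [hH x]; simp; rfl
  have stepC : ∑ i, ⟪D (P (e i)) (P (e i)), H x⟫_ℝ = -‖H x‖ ^ 2 := by
    rw [← sum_inner, hsumH, inner_neg_left, real_inner_self_eq_norm_sq]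
  -- assemble
  have expand : ∀ i, ⟪e i, P (L (e i))⟫_ℝ
      = -(⟪D (P (e i)) (P (e i)), H x⟫_ℝ + ⟪D (e i - P (e i)) (P (e i)), H x⟫_ℝ
          + ⟪D (P (e i)) (e i - P (e i)), H x⟫_ℝ + ⟪D (e i - P (e i)) (e i - P (e i)), H x⟫_ℝ) := by
    intro i
    have h1 : P (L (e i)) = -(D (e i) (H x)) := by
      have := hdH (e i)
      linear_combination (norm := abel) this
    have hdecomp : D (e i) (e i)
        = D (P (e i)) (P (e i)) + D (e i - P (e i)) (P (e i))
          + D (P (e i)) (e i - P (e i)) + D (e i - P (e i)) (e i - P (e i)) := by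
      have h2 : (e i : EuclideanSpace ℝ (Fin N)) = P (e i) + (e i - P (e i)) := by abel
      conv_lhs => rw [h2]
      simp only [map_add, ContinuousLinearMap.add_apply]
      abel
    rw [h1, inner_neg_right, ← hsax' (e i) (e i) (H x), hdecomp,
      inner_add_left, inner_add_left, inner_add_left]
  rw [stepA, Finset.sum_congr rfl fun i _ => expand i, Finset.sum_neg_distrib,
    Finset.sum_add_distrib, Finset.sum_add_distrib, Finset.sum_add_distrib, stepC, hB2]
  have hc : ∑ i, ⟪D (P (e i)) (e i - P (e i)), H x⟫_ℝ = 0 :=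
    Finset.sum_eq_zero fun i _ => hB1 _ _
  have hd : ∑ i, ⟪D (e i - P (e i)) (e i - P (e i)), H x⟫_ℝ = 0 :=
    Finset.sum_eq_zero fun i _ => hB1 _ _
  rw [hc, hd]
  ring
end

section
/- Let U ⊆ ℝ^N be open and let P, P̃ : U → (ℝ^N →L[ℝ] ℝ^N) be maps such that for every y ∈ U both P(y) and P̃(y) are orthogonal projections with P(y) ∘ P̃(y) = P̃(y) = P̃(y) ∘ P(y), and P̃ is differentiable at x ∈ U. Define the tension κ(x) := −P̃(x)( ∑_{i=1}^N (fderiv ℝ P̃ x ((P(x) − P̃(x)) e_i))((P(x) − P̃(x)) e_i) ). Then for every vector field X : U → ℝ^N differentiable at x with X(y) = P̃(y) X(y) for all y ∈ U, one has div_E X(x) − div X(x) = ⟨κ(x), X(x)⟩, where div X(x) := ∑_{i=1}^N ⟨(fderiv ℝ X x)(P(x) e_i), P(x) e_i⟩ and div_E X(x) := ∑_{i=1}^N ⟨(fderiv ℝ X x)(P̃(x) e_i), P̃(x) e_i⟩. -/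
open scoped InnerProductSpace

private lemma euclid_rep {N : ℕ} (v : EuclideanSpace ℝ (Fin N)) :
    v = ∑ j : Fin N, v j • EuclideanSpace.single j (1 : ℝ) := by
  have h := (EuclideanSpace.basisFun (Fin N) ℝ).sum_repr v
  simp only [EuclideanSpace.basisFun_apply, EuclideanSpace.basisFun_repr] at h
  exact h.symm

private lemma euclid_inner_single {N : ℕ} (u : EuclideanSpace ℝ (Fin N)) (i : Fin N) :
    ⟪u, EuclideanSpace.single i (1 : ℝ)⟫_ℝ = u i := by
  simp [EuclideanSpace.inner_single_right]

private lemma euclid_trace_comm {N : ℕ}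
    (M A : EuclideanSpace ℝ (Fin N) →L[ℝ] EuclideanSpace ℝ (Fin N)) :
    ∑ i : Fin N, ⟪M (A (EuclideanSpace.single i (1 : ℝ))), EuclideanSpace.single i (1 : ℝ)⟫_ℝ
      = ∑ i : Fin N,
        ⟪A (M (EuclideanSpace.single i (1 : ℝ))), EuclideanSpace.single i (1 : ℝ)⟫_ℝ := by
  simp only [euclid_inner_single]
  have key : ∀ (B C : EuclideanSpace ℝ (Fin N) →L[ℝ] EuclideanSpace ℝ (Fin N)) (i : Fin N),
      (B (C (EuclideanSpace.single i (1 : ℝ)))) i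
        = ∑ j : Fin N, (C (EuclideanSpace.single i (1 : ℝ))) j
            * (B (EuclideanSpace.single j (1 : ℝ))) i := by
    intro B C i
    conv_lhs => rw [euclid_rep (C (EuclideanSpace.single i (1 : ℝ)))]
    rw [map_sum]
    rw [WithLp.ofLp_sum, Finset.sum_apply]
    refine Finset.sum_congr rfl fun j _ => ?_
    simp [PiLp.smul_apply, smul_eq_mul]
  calc ∑ i : Fin N, (M (A (EuclideanSpace.single i (1 : ℝ)))) i
      = ∑ i : Fin N, ∑ j : Fin N, (A (EuclideanSpace.single i (1 : ℝ))) j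
          * (M (EuclideanSpace.single j (1 : ℝ))) i := by
        exact Finset.sum_congr rfl fun i _ => key M A i
    _ = ∑ j : Fin N, ∑ i : Fin N, (M (EuclideanSpace.single j (1 : ℝ))) i
          * (A (EuclideanSpace.single i (1 : ℝ))) j := by
        rw [Finset.sum_comm]
        exact Finset.sum_congr rfl fun j _ => Finset.sum_congr rfl fun i _ => mul_comm _ _
    _ = ∑ j : Fin N, (A (M (EuclideanSpace.single j (1 : ℝ)))) j := by
        exact Finset.sum_congr rfl fun j _ => (key A M j).symm

/-- For a self-adjoint idempotent `A`, `∑ i ⟪M (A eᵢ), A eᵢ⟫ = ∑ i ⟪M (A eᵢ), eᵢ⟫`. -/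
private lemma euclid_proj_trace {N : ℕ}
    (M A : EuclideanSpace ℝ (Fin N) →L[ℝ] EuclideanSpace ℝ (Fin N))
    (hsa : ∀ v w : EuclideanSpace ℝ (Fin N), ⟪A v, w⟫_ℝ = ⟪v, A w⟫_ℝ)
    (hidem : ∀ v : EuclideanSpace ℝ (Fin N), A (A v) = A v) :
    ∑ i : Fin N, ⟪M (A (EuclideanSpace.single i (1 : ℝ))), A (EuclideanSpace.single i (1 : ℝ))⟫_ℝ
      = ∑ i : Fin N,
        ⟪M (A (EuclideanSpace.single i (1 : ℝ))), EuclideanSpace.single i (1 : ℝ)⟫_ℝ := by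
  have h1 : ∀ i : Fin N,
      ⟪M (A (EuclideanSpace.single i (1 : ℝ))), A (EuclideanSpace.single i (1 : ℝ))⟫_ℝ
        = ⟪A ((M.comp A) (EuclideanSpace.single i (1 : ℝ))), EuclideanSpace.single i (1 : ℝ)⟫_ℝ := by
    intro i
    rw [← hsa]
    rfl
  rw [Finset.sum_congr rfl fun i _ => h1 i, ← euclid_trace_comm (M.comp A) A]
  refine Finset.sum_congr rfl fun i _ => ?_
  simp only [ContinuousLinearMap.comp_apply, hidem]

/-- Definition 2.3 realized in the embedding: the tension
`κ x = −Pt x (∑ i (fderiv ℝ Pt x ((P x − Pt x) eᵢ))((P x − Pt x) eᵢ))` satisfies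
`div_E X x − div X x = ⟪κ x, X x⟫` for every leafwise vector field `X`
(`X y = Pt y (X y)`), where `P y` projects onto the ambient tangent space `T_yM` and
`Pt y` (playing the role of `P̃`) onto the leaf tangent space `E_y ⊆ T_yM`. -/
theorem tension_inner_eq_divE_sub_div {N : ℕ}
    (U : Set (EuclideanSpace ℝ (Fin N))) (hU : IsOpen U)
    (P Pt : EuclideanSpace ℝ (Fin N) → (EuclideanSpace ℝ (Fin N) →L[ℝ] EuclideanSpace ℝ (Fin N)))
    (hPsa : ∀ y ∈ U, ∀ v w : EuclideanSpace ℝ (Fin N), ⟪P y v, w⟫_ℝ = ⟪v, P y w⟫_ℝ)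
    (hPidem : ∀ y ∈ U, ∀ v : EuclideanSpace ℝ (Fin N), P y (P y v) = P y v)
    (hPtsa : ∀ y ∈ U, ∀ v w : EuclideanSpace ℝ (Fin N), ⟪Pt y v, w⟫_ℝ = ⟪v, Pt y w⟫_ℝ)
    (hPtidem : ∀ y ∈ U, ∀ v : EuclideanSpace ℝ (Fin N), Pt y (Pt y v) = Pt y v)
    (hcomp : ∀ y ∈ U, (P y).comp (Pt y) = Pt y ∧ (Pt y).comp (P y) = Pt y)
    (x : EuclideanSpace ℝ (Fin N)) (hx : x ∈ U)
    (hdiff : DifferentiableAt ℝ Pt x)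
    (κ : EuclideanSpace ℝ (Fin N))
    (hκ : κ = -(Pt x (∑ i : Fin N,
        (fderiv ℝ Pt x ((P x - Pt x) (EuclideanSpace.single i (1 : ℝ))))
          ((P x - Pt x) (EuclideanSpace.single i (1 : ℝ))))))
    (X : EuclideanSpace ℝ (Fin N) → EuclideanSpace ℝ (Fin N))
    (hXdiff : DifferentiableAt ℝ X x)
    (hXleaf : ∀ y ∈ U, X y = Pt y (X y)) :
    (∑ i : Fin N, ⟪(fderiv ℝ X x) (Pt x (EuclideanSpace.single i (1 : ℝ))),
          Pt x (EuclideanSpace.single i (1 : ℝ))⟫_ℝ)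
      - (∑ i : Fin N, ⟪(fderiv ℝ X x) (P x (EuclideanSpace.single i (1 : ℝ))),
          P x (EuclideanSpace.single i (1 : ℝ))⟫_ℝ)
      = ⟪κ, X x⟫_ℝ := by
  classical
  set e : Fin N → EuclideanSpace ℝ (Fin N) := fun i => EuclideanSpace.single i (1 : ℝ) with he
  set T := fderiv ℝ X x with hT
  set D := fderiv ℝ Pt x with hD
  set R := P x - Pt x with hR
  -- Basic algebraic facts
  have hPPt : ∀ v, P x (Pt x v) = Pt x v := fun v =>
    ContinuousLinearMap.ext_iff.mp (hcomp x hx).1 v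
  have hPtP : ∀ v, Pt x (P x v) = Pt x v := fun v =>
    ContinuousLinearMap.ext_iff.mp (hcomp x hx).2 v
  have hRapp : ∀ v, R v = P x v - Pt x v := fun v => rfl
  have hQtR : ∀ v, Pt x (R v) = 0 := by
    intro v
    rw [hRapp, map_sub, hPtP, hPtidem x hx, sub_self]
  have hRidem : ∀ v, R (R v) = R v := by
    intro v
    simp only [hRapp, map_sub, hPidem x hx, hPPt, hPtP, hPtidem x hx]
    abel
  have hRsa : ∀ v w, ⟪R v, w⟫_ℝ = ⟪v, R w⟫_ℝ := by
    intro v w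
    rw [hRapp, hRapp, inner_sub_left, inner_sub_right, hPsa x hx, hPtsa x hx]
  -- Self-adjointness of the derivative of Pt
  have hDsa : ∀ v w1 w2, ⟪(D v) w1, w2⟫_ℝ = ⟪w1, (D v) w2⟫_ℝ := by
    intro v w1 w2
    have hf1 : DifferentiableAt ℝ (fun y => Pt y w1) x :=
      hdiff.clm_apply (differentiableAt_const _)
    have hf2 : DifferentiableAt ℝ (fun y => Pt y w2) x :=
      hdiff.clm_apply (differentiableAt_const _)
    have hfder : ∀ w : EuclideanSpace ℝ (Fin N), fderiv ℝ (fun y => Pt y w) x v = (D v) w := by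
      intro w
      rw [fderiv_clm_apply hdiff (differentiableAt_const w)]
      simp [hD]
    have e1 : fderiv ℝ (fun y => ⟪Pt y w1, w2⟫_ℝ) x v = ⟪(D v) w1, w2⟫_ℝ := by
      rw [fderiv_inner_apply ℝ hf1 (differentiableAt_const w2)]
      simp [hfder w1]
    have e2 : fderiv ℝ (fun y => ⟪w1, Pt y w2⟫_ℝ) x v = ⟪w1, (D v) w2⟫_ℝ := by
      rw [fderiv_inner_apply ℝ (differentiableAt_const w1) hf2]
      simp [hfder w2]
    have hfun : (fun y => ⟪Pt y w1, w2⟫_ℝ) =ᶠ[nhds x] (fun y => ⟪w1, Pt y w2⟫_ℝ) := by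
      filter_upwards [hU.mem_nhds hx] with y hy
      exact hPtsa y hy w1 w2
    rw [← e1, ← e2, hfun.fderiv_eq]
  -- The derivative relation coming from X = Pt ∘ X
  have heq : X =ᶠ[nhds x] (fun y => Pt y (X y)) := by
    filter_upwards [hU.mem_nhds hx] with y hy
    exact hXleaf y hy
  have hTeq : ∀ v, T v = Pt x (T v) + (D v) (X x) := by
    intro v
    have h := heq.fderiv_eq (𝕜 := ℝ)
    rw [fderiv_clm_apply hdiff hXdiff] at h
    conv_lhs => rw [hT, h]
    simp [hD, hT]
  -- Reduce the left side using the trace lemmas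
  have hQ : ∑ i : Fin N, ⟪T (P x (e i)), P x (e i)⟫_ℝ = ∑ i : Fin N, ⟪T (P x (e i)), e i⟫_ℝ :=
    euclid_proj_trace T (P x) (hPsa x hx) (hPidem x hx)
  have hQt : ∑ i : Fin N, ⟪T (Pt x (e i)), Pt x (e i)⟫_ℝ = ∑ i : Fin N, ⟪T (Pt x (e i)), e i⟫_ℝ :=
    euclid_proj_trace T (Pt x) (hPtsa x hx) (hPtidem x hx)
  have hRtr : ∑ i : Fin N, ⟪T (R (e i)), R (e i)⟫_ℝ = ∑ i : Fin N, ⟪T (R (e i)), e i⟫_ℝ :=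
    euclid_proj_trace T R hRsa hRidem
  have hmain : (∑ i : Fin N, ⟪T (Pt x (e i)), Pt x (e i)⟫_ℝ)
      - (∑ i : Fin N, ⟪T (P x (e i)), P x (e i)⟫_ℝ)
      = -∑ i : Fin N, ⟪T (R (e i)), R (e i)⟫_ℝ := by
    rw [hQ, hQt, hRtr, ← Finset.sum_sub_distrib, ← Finset.sum_neg_distrib]
    refine Finset.sum_congr rfl fun i _ => ?_
    rw [← inner_sub_left, ← inner_neg_left]
    congr 1
    rw [hRapp, map_sub]
    abel
  -- Compute each inner product using the derivative relation
  have hterm : ∀ i : Fin N, ⟪T (R (e i)), R (e i)⟫_ℝ = ⟪(D (R (e i))) (X x), R (e i)⟫_ℝ := by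
    intro i
    rw [hTeq (R (e i)), inner_add_left]
    have : ⟪Pt x (T (R (e i))), R (e i)⟫_ℝ = 0 := by
      rw [hPtsa x hx, hQtR, inner_zero_right]
    rw [this, zero_add]
  -- Compute the right side
  have hXx : Pt x (X x) = X x := (hXleaf x hx).symm
  have hrhs : ⟪κ, X x⟫_ℝ = -∑ i : Fin N, ⟪(D (R (e i))) (X x), R (e i)⟫_ℝ := by
    rw [hκ, inner_neg_left]
    congr 1
    rw [hPtsa x hx, hXx, sum_inner]
    refine Finset.sum_congr rfl fun i _ => ?_
    rw [hDsa, real_inner_comm]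
  rw [hmain, hrhs]
  congr 1
  exact Finset.sum_congr rfl fun i _ => hterm i
end

section
/- Let U ⊆ ℝ^N be open, let P, P̃ : U → (ℝ^N →L[ℝ] ℝ^N) satisfy that each P(y), P̃(y) is an orthogonal projection with P(y) ∘ P̃(y) = P̃(y) = P̃(y) ∘ P(y), let P̃ be differentiable at x, and suppose there is a map η : U → ℝ^N, differentiable at x, with ‖η(y)‖ = 1, P(y) η(y) = η(y), and (P(y) − P̃(y)) v = ⟨v, η(y)⟩ • η(y) for all y ∈ U and v ∈ ℝ^N (codimension-one foliation of the manifold with unit normal field η inside it). Then the tension κ(x) := −P̃(x)( ∑_{i=1}^N (fderiv ℝ P̃ x ((P(x) − P̃(x)) e_i))((P(x) − P̃(x)) e_i) ) satisfies κ(x) = P(x)((fderiv ℝ η x)(η(x))), the tangential derivative of η along itself. -/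
open scoped InnerProductSpace

/-- The computation from the proof of Proposition 2.4 for a codimension-one (within `M`)
foliation with unit normal field `η`: the tension
`κ x = −Pt x (∑ i (fderiv ℝ Pt x ((P x − Pt x) eᵢ))((P x − Pt x) eᵢ))` equals the
tangential derivative of `η` along itself, `κ x = P x ((fderiv ℝ η x)(η x))`.
Here `P y` projects onto the ambient tangent space `T_yM` and `Pt y` (playing the role
of `P̃`) onto the leaf tangent space `E_y ⊆ T_yM`, with
`(P y − Pt y) v = ⟪v, η y⟫ • η y`. -/
theorem tension_eq_tangential_derivative_of_normal {N : ℕ}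
    (U : Set (EuclideanSpace ℝ (Fin N))) (hU : IsOpen U)
    (P Pt : EuclideanSpace ℝ (Fin N) → (EuclideanSpace ℝ (Fin N) →L[ℝ] EuclideanSpace ℝ (Fin N)))
    (hPsa : ∀ y ∈ U, ∀ v w : EuclideanSpace ℝ (Fin N), ⟪P y v, w⟫_ℝ = ⟪v, P y w⟫_ℝ)
    (hPidem : ∀ y ∈ U, ∀ v : EuclideanSpace ℝ (Fin N), P y (P y v) = P y v)
    (hPtsa : ∀ y ∈ U, ∀ v w : EuclideanSpace ℝ (Fin N), ⟪Pt y v, w⟫_ℝ = ⟪v, Pt y w⟫_ℝ)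
    (hPtidem : ∀ y ∈ U, ∀ v : EuclideanSpace ℝ (Fin N), Pt y (Pt y v) = Pt y v)
    (hcomp : ∀ y ∈ U, (P y).comp (Pt y) = Pt y ∧ (Pt y).comp (P y) = Pt y)
    (x : EuclideanSpace ℝ (Fin N)) (hx : x ∈ U)
    (hdiffPt : DifferentiableAt ℝ Pt x)
    (η : EuclideanSpace ℝ (Fin N) → EuclideanSpace ℝ (Fin N))
    (hdiffη : DifferentiableAt ℝ η x)
    (hηnorm : ∀ y ∈ U, ‖η y‖ = 1)
    (hηtang : ∀ y ∈ U, P y (η y) = η y)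
    (hηproj : ∀ y ∈ U, ∀ v : EuclideanSpace ℝ (Fin N),
        (P y - Pt y) v = ⟪v, η y⟫_ℝ • η y)
    (κ : EuclideanSpace ℝ (Fin N))
    (hκ : κ = -(Pt x (∑ i : Fin N,
        (fderiv ℝ Pt x ((P x - Pt x) (EuclideanSpace.single i (1 : ℝ))))
          ((P x - Pt x) (EuclideanSpace.single i (1 : ℝ)))))) :
    κ = P x ((fderiv ℝ η x) (η x)) := by
  classical
  set A := fderiv ℝ Pt x with hA
  set D := fderiv ℝ η x with hD
  have hη1 : ⟪η x, η x⟫_ℝ = 1 := by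
    rw [real_inner_self_eq_norm_sq, hηnorm x hx]; norm_num
  have hPtη : Pt x (η x) = 0 := by
    have h := hηproj x hx (η x)
    rw [hη1, one_smul] at h
    have h' : P x (η x) - Pt x (η x) = η x := by
      simpa [ContinuousLinearMap.sub_apply] using h
    rw [hηtang x hx] at h'
    exact sub_eq_self.mp h'
  -- rewrite the sum
  have hQi : ∀ i : Fin N, (P x - Pt x) (EuclideanSpace.single i (1 : ℝ))
      = (η x i) • η x := by
    intro i
    rw [hηproj x hx]
    congr 1
    simp [EuclideanSpace.inner_single_left]
  have hsum : (∑ i : Fin N,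
      (A ((P x - Pt x) (EuclideanSpace.single i (1 : ℝ))))
        ((P x - Pt x) (EuclideanSpace.single i (1 : ℝ)))) = (A (η x)) (η x) := by
    have : ∀ i : Fin N,
        (A ((P x - Pt x) (EuclideanSpace.single i (1 : ℝ))))
          ((P x - Pt x) (EuclideanSpace.single i (1 : ℝ)))
        = (η x i * η x i) • (A (η x)) (η x) := by
      intro i
      rw [hQi i, map_smul]
      simp [smul_smul]
    rw [Finset.sum_congr rfl fun i _ => this i, ← Finset.sum_smul]
    have hs : (∑ i : Fin N, η x i * η x i) = 1 := by
      rw [← hη1]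
      simp [PiLp.inner_apply, RCLike.inner_apply, mul_comm]
      rw [EuclideanSpace.norm_sq_eq]; simp [sq]
    rw [hs, one_smul]
  -- differentiate Pt y (η y) = 0 near x
  have hev : (fun y => Pt y (η y)) =ᶠ[nhds x] (fun _ => (0 : EuclideanSpace ℝ (Fin N))) := by
    filter_upwards [hU.mem_nhds hx] with y hy
    have h := hηproj y hy (η y)
    have hη1y : ⟪η y, η y⟫_ℝ = 1 := by
      rw [real_inner_self_eq_norm_sq, hηnorm y hy]; norm_num
    rw [hη1y, one_smul] at h
    have h' : P y (η y) - Pt y (η y) = η y := by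
      simpa [ContinuousLinearMap.sub_apply] using h
    rw [hηtang y hy] at h'
    exact sub_eq_self.mp h'
  have hfd0 : fderiv ℝ (fun y => Pt y (η y)) x = 0 := by
    rw [hev.fderiv_eq]; exact fderiv_const_apply 0
  have hkey : ∀ v : EuclideanSpace ℝ (Fin N),
      Pt x (D v) + (A v) (η x) = 0 := by
    intro v
    have := fderiv_clm_apply hdiffPt hdiffη
    rw [hfd0] at this
    have h2 := congrArg (fun L : EuclideanSpace ℝ (Fin N) →L[ℝ] EuclideanSpace ℝ (Fin N) => L v) this.symm
    simpa using h2
  have hAηη : (A (η x)) (η x) = - Pt x (D (η x)) := by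
    have := hkey (η x); linear_combination (norm := module) this
  -- inner of D (η x) with η x is zero
  have hinner0 : ⟪D (η x), η x⟫_ℝ = 0 := by
    have hevi : (fun y => ⟪η y, η y⟫_ℝ) =ᶠ[nhds x] (fun _ => (1 : ℝ)) := by
      filter_upwards [hU.mem_nhds hx] with y hy
      rw [real_inner_self_eq_norm_sq, hηnorm y hy]; norm_num
    have h0 : fderiv ℝ (fun y => ⟪η y, η y⟫_ℝ) x = 0 := by
      rw [hevi.fderiv_eq]; exact fderiv_const_apply 1
    have h1 := fderiv_inner_apply (𝕜 := ℝ) hdiffη hdiffη (η x)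
    rw [h0] at h1
    simp only [ContinuousLinearMap.zero_apply] at h1
    rw [real_inner_comm] at h1
    have : (2 : ℝ) * ⟪D (η x), η x⟫_ℝ = 0 := by linarith
    linarith
  have hPQ : P x (D (η x)) = Pt x (D (η x)) := by
    have h := hηproj x hx (D (η x))
    rw [hinner0, zero_smul] at h
    have h' : P x (D (η x)) - Pt x (D (η x)) = 0 := by
      simpa [ContinuousLinearMap.sub_apply] using h
    exact sub_eq_zero.mp h'
  rw [hκ, hsum, hAηη, map_neg, neg_neg, hPtidem x hx, hPQ]
end

section
/- Let U ⊆ ℝ^N be open, P̃ : U → (ℝ^N →L[ℝ] ℝ^N) continuously differentiable with each P̃(y) an orthogonal projection, and f : U → ℝ twice continuously differentiable. With X_i g (y) := (fderiv ℝ g y)(P̃(y) e_i) and Δ_E g := ∑_{i=1}^N X_i(X_i g) for twice continuously differentiable g : U → ℝ, one has for every x ∈ U: Δ_E(f²)(x) − 2 f(x) Δ_E f(x) = 2 ‖P̃(x)(gradient f x)‖². -/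
open scoped InnerProductSpace

/-- The computational core of Corollary 3.3:
`Δ_E(f²)(x) − 2 f(x) Δ_E f(x) = 2 ‖grad_E f (x)‖²`, where
`Δ_E g (x) = ∑ i (fderiv ℝ (y ↦ fderiv ℝ g y (Pt y eᵢ)) x)(Pt x eᵢ)` is the leafwise
Laplacian and `grad_E f (x) = Pt x (gradient f x)` the leafwise gradient, for a C¹
family `Pt` (playing the role of `P̃`) of orthogonal projections and `f` C² on `U`. -/
theorem leafwise_laplacian_sq_identity {N : ℕ}
    (U : Set (EuclideanSpace ℝ (Fin N))) (hU : IsOpen U)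
    (Pt : EuclideanSpace ℝ (Fin N) → (EuclideanSpace ℝ (Fin N) →L[ℝ] EuclideanSpace ℝ (Fin N)))
    (hP : ContDiffOn ℝ 1 Pt U)
    (hsa : ∀ y ∈ U, ∀ v w : EuclideanSpace ℝ (Fin N), ⟪Pt y v, w⟫_ℝ = ⟪v, Pt y w⟫_ℝ)
    (hidem : ∀ y ∈ U, ∀ v : EuclideanSpace ℝ (Fin N), Pt y (Pt y v) = Pt y v)
    (f : EuclideanSpace ℝ (Fin N) → ℝ) (hf : ContDiffOn ℝ 2 f U)
    (ΔE : (EuclideanSpace ℝ (Fin N) → ℝ) → EuclideanSpace ℝ (Fin N) → ℝ)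
    (hΔE : ∀ (g : EuclideanSpace ℝ (Fin N) → ℝ) (x : EuclideanSpace ℝ (Fin N)),
      ΔE g x = ∑ i : Fin N,
        (fderiv ℝ (fun y => fderiv ℝ g y (Pt y (EuclideanSpace.single i (1 : ℝ)))) x)
          (Pt x (EuclideanSpace.single i (1 : ℝ))))
    (x : EuclideanSpace ℝ (Fin N)) (hx : x ∈ U) :
    ΔE (fun y => f y ^ 2) x - 2 * f x * ΔE f x = 2 * ‖Pt x (gradient f x)‖ ^ 2 := by
  set e : Fin N → EuclideanSpace ℝ (Fin N) := fun i => EuclideanSpace.single i (1 : ℝ) with he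
  -- differentiability of f on U
  have hfd : ∀ y ∈ U, DifferentiableAt ℝ f y := fun y hy =>
    ((hf.differentiableOn (by norm_num)).differentiableAt (hU.mem_nhds hy))
  -- h i : the leafwise first derivative
  set h : Fin N → EuclideanSpace ℝ (Fin N) → ℝ :=
    fun i y => fderiv ℝ f y (Pt y (e i)) with hh
  have hF : ContDiffOn ℝ 1 (fun y => fderiv ℝ f y) U :=
    hf.fderiv_of_isOpen hU (by norm_num)
  have hPe : ∀ i, ContDiffOn ℝ 1 (fun y => Pt y (e i)) U := fun i =>
    hP.clm_apply contDiffOn_const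
  have hhC : ∀ i, ContDiffOn ℝ 1 (h i) U := fun i => hF.clm_apply (hPe i)
  have hhd : ∀ i, DifferentiableAt ℝ (h i) x := fun i =>
    ((hhC i).differentiableOn one_ne_zero).differentiableAt (hU.mem_nhds hx)
  -- key : value of ΔE (f²) termwise
  have key : ∀ i, (fderiv ℝ (fun y => fderiv ℝ (fun z => f z ^ 2) y (Pt y (e i))) x) (Pt x (e i))
      = 2 * h i x ^ 2 + 2 * f x * (fderiv ℝ (h i) x) (Pt x (e i)) := by
    intro i
    have heq : (fun y => fderiv ℝ (fun z => f z ^ 2) y (Pt y (e i)))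
        =ᶠ[nhds x] (fun y => 2 * f y * h i y) := by
      filter_upwards [hU.mem_nhds hx] with y hy
      have hd := hfd y hy
      have : fderiv ℝ (fun z => f z ^ 2) y = (2 * f y) • fderiv ℝ f y := by
        have h1 : HasFDerivAt (fun z => f z * f z)
            (f y • fderiv ℝ f y + f y • fderiv ℝ f y) y :=
          hd.hasFDerivAt.mul hd.hasFDerivAt
        have h2 : (fun z => f z ^ 2) = fun z => f z * f z := by
          funext z; ring
        rw [h2, h1.fderiv]
        ext v
        simp [two_mul, mul_comm, add_mul]
        ring
      rw [this]
      simp [hh, mul_assoc]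
    rw [heq.fderiv_eq]
    have hmul : HasFDerivAt (fun y => 2 * f y * h i y)
        ((2 * f x) • fderiv ℝ (h i) x + h i x • ((2:ℝ) • fderiv ℝ f x)) x := by
      have h1 : HasFDerivAt (fun y => 2 * f y) ((2:ℝ) • fderiv ℝ f x) x :=
        ((hfd x hx).hasFDerivAt).const_mul 2
      exact h1.mul (hhd i).hasFDerivAt
    rw [hmul.fderiv]
    simp [hh]
    ring
  -- gradient relation
  have hgrad : ∀ v, fderiv ℝ f x v = ⟪gradient f x, v⟫_ℝ := by
    intro v
    rw [gradient, ← InnerProductSpace.toDual_apply_apply,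
      (InnerProductSpace.toDual ℝ _).apply_symm_apply]
  have hcoord : ∀ i, h i x = Pt x (gradient f x) i := by
    intro i
    rw [hh]
    simp only
    rw [hgrad, real_inner_comm, hsa x hx, ← real_inner_comm]
    rw [EuclideanSpace.inner_single_right]
    simp
  have hnorm : ‖Pt x (gradient f x)‖ ^ 2 = ∑ i, (h i x) ^ 2 := by
    rw [← real_inner_self_eq_norm_sq]
    rw [PiLp.inner_apply]
    refine Finset.sum_congr rfl fun i _ => ?_
    rw [hcoord i]
    simp [sq]
  rw [hΔE, hΔE, hnorm]
  rw [Finset.sum_congr rfl fun i _ => key i]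
  rw [Finset.sum_add_distrib, Finset.mul_sum, ← Finset.mul_sum]
  ring
end

section
/- Let U ⊆ ℝ^N be open and let P, P̃ : U → (ℝ^N →L[ℝ] ℝ^N) be twice continuously differentiable maps such that for every y ∈ U both P(y) and P̃(y) are orthogonal projections with P(y) ∘ P̃(y) = P̃(y) = P̃(y) ∘ P(y), and let V : U → ℝ^N be continuously differentiable with V(y) = P̃(y) V(y) for all y ∈ U. With X_i(y) := P̃(y) e_i, div Y(x) := ∑_{j=1}^N ⟨(fderiv ℝ Y x)(P(x) e_j), P(x) e_j⟩, div_E Y(x) := ∑_{j=1}^N ⟨(fderiv ℝ Y x)(P̃(x) e_j), P̃(x) e_j⟩, mean curvature H(x) := −∑_{j=1}^N (fderiv ℝ P̃ x (P̃(x) e_j))(P̃(x) e_j), and tension κ(y) := −P̃(y)( ∑_{i=1}^N (fderiv ℝ P̃ y ((P(y) − P̃(y)) e_i))((P(y) − P̃(y)) e_i) ), one has for every x ∈ U: div V(x) + (1/2) ∑_{i=1}^N (fderiv ℝ (div X_i) x)(X_i(x)) = −(1/2)( ‖H(x)‖² − div_E(2V − κ)(x) + 2⟨κ(x), V(x)⟩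 ). -/
open scoped InnerProductSpace

namespace LyapAux
variable {N : ℕ}

variable {N : ℕ}
noncomputable abbrev ee (N : ℕ) (i : Fin N) : EuclideanSpace ℝ (Fin N) := EuclideanSpace.single i (1 : ℝ)

lemma sum_coord {ι : Type*} (s : Finset ι) (f : ι → EuclideanSpace ℝ (Fin N)) (a : Fin N) :
    (∑ i ∈ s, f i) a = ∑ i ∈ s, f i a := by
  induction s using Finset.cons_induction with
  | empty => rfl
  | cons i s hi ih => rw [Finset.sum_cons, Finset.sum_cons, ← ih]; rfl

lemma smul_coord (c : ℝ) (v : EuclideanSpace ℝ (Fin N)) (a : Fin N) : (c • v) a = c * v a := rfl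

lemma vec_eq_sum (v : EuclideanSpace ℝ (Fin N)) : v = ∑ i, v i • ee N i := by
  ext a
  rw [sum_coord]
  simp [smul_coord, EuclideanSpace.single_apply]

lemma inner_coord (u w : EuclideanSpace ℝ (Fin N)) : ⟪u, w⟫_ℝ = ∑ a, u a * w a := by
  simp [PiLp.inner_apply, RCLike.inner_apply, mul_comm]

lemma clm_coord (A : EuclideanSpace ℝ (Fin N) →L[ℝ] EuclideanSpace ℝ (Fin N))
    (v : EuclideanSpace ℝ (Fin N)) (a : Fin N) :
    A v a = ∑ b, v b * A (ee N b) a := by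
  conv_lhs => rw [vec_eq_sum v]
  rw [map_sum, sum_coord]
  simp [smul_coord]

lemma fderiv_coord {f : EuclideanSpace ℝ (Fin N) → EuclideanSpace ℝ (Fin N)}
    {x : EuclideanSpace ℝ (Fin N)} (hf : DifferentiableAt ℝ f x)
    (h : EuclideanSpace ℝ (Fin N)) (a : Fin N) :
    fderiv ℝ f x h a = fderiv ℝ (fun y => f y a) x h := by
  have heq : (fun y => f y a) = fun y => (EuclideanSpace.proj a : EuclideanSpace ℝ (Fin N) →L[ℝ] ℝ) (f y) := rfl
  rw [heq, fderiv_clm_apply (differentiableAt_const _) hf]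
  simp

lemma fderiv_dir {f : EuclideanSpace ℝ (Fin N) → ℝ}
    {x : EuclideanSpace ℝ (Fin N)}
    (h : EuclideanSpace ℝ (Fin N)) :
    fderiv ℝ f x h = ∑ c, h c * fderiv ℝ f x (ee N c) := by
  conv_lhs => rw [vec_eq_sum h]
  rw [map_sum]
  simp

lemma fderiv_vec_dir {F : EuclideanSpace ℝ (Fin N) → EuclideanSpace ℝ (Fin N)}
    {y : EuclideanSpace ℝ (Fin N)} (hF : DifferentiableAt ℝ F y)
    (h : EuclideanSpace ℝ (Fin N)) (a : Fin N) :
    fderiv ℝ F y h a = ∑ c, h c * fderiv ℝ (fun z => F z a) y (ee N c) := by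
  rw [fderiv_coord hF, fderiv_dir]

lemma coord_eq_inner (u : EuclideanSpace ℝ (Fin N)) (a : Fin N) : ⟪u, ee N a⟫_ℝ = u a := by
  rw [inner_coord]
  simp [EuclideanSpace.single_apply]

lemma proj_entry_symm (Pr : EuclideanSpace ℝ (Fin N) →L[ℝ] EuclideanSpace ℝ (Fin N))
    (hsym : ∀ v w, ⟪Pr v, w⟫_ℝ = ⟪v, Pr w⟫_ℝ) (j a : Fin N) :
    Pr (ee N j) a = Pr (ee N a) j := by
  rw [← coord_eq_inner (Pr (ee N j)) a, hsym, real_inner_comm, coord_eq_inner]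

lemma proj_collapse (Pr : EuclideanSpace ℝ (Fin N) →L[ℝ] EuclideanSpace ℝ (Fin N))
    (hsym : ∀ v w, ⟪Pr v, w⟫_ℝ = ⟪v, Pr w⟫_ℝ) (hidem : ∀ v, Pr (Pr v) = Pr v) (c a : Fin N) :
    (∑ j, Pr (ee N j) c * Pr (ee N j) a) = Pr (ee N a) c := by
  calc (∑ j, Pr (ee N j) c * Pr (ee N j) a)
      = ∑ j, Pr (ee N a) j * Pr (ee N j) c := by
        refine Finset.sum_congr rfl fun j _ => ?_
        rw [proj_entry_symm Pr hsym j a]; ring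
    _ = Pr (Pr (ee N a)) c := (clm_coord Pr (Pr (ee N a)) c).symm
    _ = Pr (ee N a) c := by rw [hidem]

lemma div_reduce {F : EuclideanSpace ℝ (Fin N) → EuclideanSpace ℝ (Fin N)}
    {y : EuclideanSpace ℝ (Fin N)} (hF : DifferentiableAt ℝ F y)
    (Pr : EuclideanSpace ℝ (Fin N) →L[ℝ] EuclideanSpace ℝ (Fin N))
    (hsym : ∀ v w, ⟪Pr v, w⟫_ℝ = ⟪v, Pr w⟫_ℝ) (hidem : ∀ v, Pr (Pr v) = Pr v) :
    (∑ j, ⟪fderiv ℝ F y (Pr (ee N j)), Pr (ee N j)⟫_ℝ)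
      = ∑ c, ∑ a, Pr (ee N a) c * fderiv ℝ (fun z => F z a) y (ee N c) := by
  calc (∑ j, ⟪fderiv ℝ F y (Pr (ee N j)), Pr (ee N j)⟫_ℝ)
      = ∑ j, ∑ a, (∑ c, Pr (ee N j) c * fderiv ℝ (fun z => F z a) y (ee N c)) * Pr (ee N j) a := by
        refine Finset.sum_congr rfl fun j _ => ?_
        rw [inner_coord]
        refine Finset.sum_congr rfl fun a _ => ?_
        rw [fderiv_vec_dir hF]
    _ = ∑ j, ∑ a, ∑ c, Pr (ee N j) c * fderiv ℝ (fun z => F z a) y (ee N c) * Pr (ee N j) a := by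
        refine Finset.sum_congr rfl fun j _ => Finset.sum_congr rfl fun a _ => ?_
        rw [Finset.sum_mul]
    _ = ∑ a, ∑ c, ∑ j, Pr (ee N j) c * fderiv ℝ (fun z => F z a) y (ee N c) * Pr (ee N j) a := by
        rw [Finset.sum_comm]
        exact Finset.sum_congr rfl fun a _ => Finset.sum_comm
    _ = ∑ a, ∑ c, fderiv ℝ (fun z => F z a) y (ee N c) * ∑ j, Pr (ee N j) c * Pr (ee N j) a := by
        refine Finset.sum_congr rfl fun a _ => Finset.sum_congr rfl fun c _ => ?_
        rw [Finset.mul_sum]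
        refine Finset.sum_congr rfl fun j _ => by ring
    _ = ∑ a, ∑ c, Pr (ee N a) c * fderiv ℝ (fun z => F z a) y (ee N c) := by
        refine Finset.sum_congr rfl fun a _ => Finset.sum_congr rfl fun c _ => ?_
        rw [proj_collapse Pr hsym hidem c a]; ring
    _ = ∑ c, ∑ a, Pr (ee N a) c * fderiv ℝ (fun z => F z a) y (ee N c) := Finset.sum_comm

noncomputable def opEntry (N : ℕ) (a b : Fin N) :
    (EuclideanSpace ℝ (Fin N) →L[ℝ] EuclideanSpace ℝ (Fin N)) →L[ℝ] ℝ :=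
  (EuclideanSpace.proj a).comp (ContinuousLinearMap.apply ℝ (EuclideanSpace ℝ (Fin N)) (ee N b))

lemma opEntry_apply (a b : Fin N) (A : EuclideanSpace ℝ (Fin N) →L[ℝ] EuclideanSpace ℝ (Fin N)) :
    opEntry N a b A = A (ee N b) a := rfl

noncomputable def opEntry2 (N : ℕ) (c b a : Fin N) :
    (EuclideanSpace ℝ (Fin N) →L[ℝ] (EuclideanSpace ℝ (Fin N) →L[ℝ] EuclideanSpace ℝ (Fin N))) →L[ℝ] ℝ :=
  (opEntry N a b).comp (ContinuousLinearMap.apply ℝ (EuclideanSpace ℝ (Fin N) →L[ℝ] EuclideanSpace ℝ (Fin N)) (ee N c))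

lemma opEntry2_apply (c b a : Fin N)
    (A : EuclideanSpace ℝ (Fin N) →L[ℝ] (EuclideanSpace ℝ (Fin N) →L[ℝ] EuclideanSpace ℝ (Fin N))) :
    opEntry2 N c b a A = A (ee N c) (ee N b) a := rfl

-- eventual equality on an open set gives equal fderivs
lemma fderiv_congr_open {U : Set (EuclideanSpace ℝ (Fin N))} (hU : IsOpen U)
    {x : EuclideanSpace ℝ (Fin N)} (hx : x ∈ U) {f g : EuclideanSpace ℝ (Fin N) → ℝ}
    (h : ∀ y ∈ U, f y = g y) : fderiv ℝ f x = fderiv ℝ g x :=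
  Filter.EventuallyEq.fderiv_eq (Filter.eventuallyEq_of_mem (hU.mem_nhds hx) h)

lemma differentiableAt_congr_open {U : Set (EuclideanSpace ℝ (Fin N))} (hU : IsOpen U)
    {x : EuclideanSpace ℝ (Fin N)} (hx : x ∈ U) {f g : EuclideanSpace ℝ (Fin N) → ℝ}
    (h : ∀ y ∈ U, f y = g y) (hg : DifferentiableAt ℝ g x) : DifferentiableAt ℝ f x :=
  (Filter.EventuallyEq.differentiableAt_iff (Filter.eventuallyEq_of_mem (hU.mem_nhds hx) h)).2 hg

-- derivative of a double sum of products, applied to a direction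
lemma D_sum2_mul {x h : EuclideanSpace ℝ (Fin N)} (f g : Fin N → Fin N → EuclideanSpace ℝ (Fin N) → ℝ)
    (hf : ∀ c a, DifferentiableAt ℝ (f c a) x) (hg : ∀ c a, DifferentiableAt ℝ (g c a) x) :
    fderiv ℝ (fun y => ∑ c, ∑ a, f c a y * g c a y) x h
      = ∑ c, ∑ a, (fderiv ℝ (f c a) x h * g c a x + f c a x * fderiv ℝ (g c a) x h) := by
  have hrow : ∀ c, DifferentiableAt ℝ (fun y => ∑ a, f c a y * g c a y) x := by
    intro c
    exact DifferentiableAt.fun_sum fun a _ => (hf c a).mul (hg c a)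
  rw [fderiv_fun_sum (fun c _ => hrow c)]
  rw [ContinuousLinearMap.sum_apply]
  refine Finset.sum_congr rfl fun c _ => ?_
  rw [fderiv_fun_sum (A := fun a y => f c a y * g c a y) (fun a _ => (hf c a).mul (hg c a)), ContinuousLinearMap.sum_apply]
  refine Finset.sum_congr rfl fun a _ => ?_
  rw [fderiv_fun_mul (hf c a) (hg c a)]
  simp [mul_comm]
  ring

lemma D_sum_mul {x h : EuclideanSpace ℝ (Fin N)} (f g : Fin N → EuclideanSpace ℝ (Fin N) → ℝ)
    (hf : ∀ a, DifferentiableAt ℝ (f a) x) (hg : ∀ a, DifferentiableAt ℝ (g a) x) :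
    fderiv ℝ (fun y => ∑ a, f a y * g a y) x h
      = ∑ a, (fderiv ℝ (f a) x h * g a x + f a x * fderiv ℝ (g a) x h) := by
  rw [fderiv_fun_sum (A := fun a y => f a y * g a y) (fun a _ => (hf a).mul (hg a)), ContinuousLinearMap.sum_apply]
  refine Finset.sum_congr rfl fun a _ => ?_
  rw [fderiv_fun_mul (hf a) (hg a)]
  simp [mul_comm]
  ring



lemma QMQ_zero (Q M : Matrix (Fin N) (Fin N) ℝ) (hQQ : Q * Q = Q)
    (hM : M = M * Q + Q * M) : Q * M * Q = 0 := by
  have h : Q * M * Q = Q * M * Q + Q * M * Q := by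
    calc Q * M * Q = Q * (M * Q + Q * M) * Q := by rw [← hM]
      _ = Q * M * Q * Q + Q * Q * M * Q := by noncomm_ring
      _ = Q * M * Q + Q * M * Q := by rw [mul_assoc (Q * M) Q Q, hQQ]
  have h3 : Q * M * Q + Q * M * Q = Q * M * Q + 0 := by rw [add_zero]; exact h.symm
  exact (add_left_cancel h3)

lemma QCQ_eq (Q A B C : Matrix (Fin N) (Fin N) ℝ) (hQQ : Q * Q = Q)
    (hC : C = C * Q + A * B + B * A + Q * C) :
    Q * C * Q = -(Q * (A * B) * Q + Q * (B * A) * Q) := by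
  have h : Q * C * Q = Q * C * Q + (Q * (A * B) * Q + Q * (B * A) * Q + Q * C * Q) := by
    calc Q * C * Q = Q * (C * Q + A * B + B * A + Q * C) * Q := by rw [← hC]
      _ = Q * C * Q * Q + (Q * (A * B) * Q + Q * (B * A) * Q + Q * Q * C * Q) := by noncomm_ring
      _ = Q * C * Q + (Q * (A * B) * Q + Q * (B * A) * Q + Q * C * Q) := by
          rw [mul_assoc (Q * C) Q Q, hQQ]
  have h3 : Q * C * Q + (Q * (A * B) * Q + Q * (B * A) * Q + Q * C * Q) = Q * C * Q + 0 := by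
    rw [add_zero]; exact h.symm
  have h4 := add_left_cancel h3
  have h5 : (Q * (A * B) * Q + Q * (B * A) * Q) + Q * C * Q = 0 := by rw [← h4]
  exact eq_neg_of_add_eq_zero_right h5

theorem key_algebra
    (q p Dv Dκ DS : Fin N → Fin N → ℝ) (v S κv : Fin N → ℝ)
    (Dq Dp : Fin N → Fin N → Fin N → ℝ)
    (DDq : Fin N → Fin N → Fin N → Fin N → ℝ)
    (hqsym : ∀ a b, q a b = q b a)
    (hpsym : ∀ a b, p a b = p b a)
    (hqq : ∀ a b, (∑ c, q a c * q c b) = q a b)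
    (hpq : ∀ a b, (∑ c, p a c * q c b) = q a b)
    (hqp : ∀ a b, (∑ c, q a c * p c b) = q a b)
    (hv : ∀ a, (∑ b, q a b * v b) = v a)
    (hDqsym : ∀ c a b, Dq c a b = Dq c b a)
    (hDDqsym : ∀ b c a i, DDq b c a i = DDq b c i a)
    (hR4 : ∀ d a b, Dq d a b = (∑ c, Dq d a c * q c b) + ∑ c, q a c * Dq d c b)
    (hR5 : ∀ b d a e, DDq b d a e = (∑ c, DDq b d a c * q c e) + (∑ c, Dq d a c * Dq b c e)
        + (∑ c, Dq b a c * Dq d c e) + ∑ c, q a c * DDq b d c e)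
    (hR9 : ∀ c a, Dv c a = (∑ b, Dq c a b * v b) + ∑ b, q a b * Dv c b)
    (hS : ∀ b, S b = ∑ d, ∑ e, (p d e - q d e) * Dq d b e)
    (hκ : ∀ a, κv a = -∑ b, q a b * S b)
    (hDS : ∀ c b, DS c b = (∑ d, ∑ e, (Dp c d e - Dq c d e) * Dq d b e)
        + ∑ d, ∑ e, (p d e - q d e) * DDq c d b e)
    (hDκ : ∀ c a, Dκ c a = -((∑ b, Dq c a b * S b) + ∑ b, q a b * DS c b)) :
    (∑ c, ∑ a, p c a * Dv c a)
      + (1 / 2) * (∑ i, ∑ b, q b i * (∑ c, ∑ a, (Dp b c a * Dq c a i + p c a * DDq b c a i)))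
      = -(1 / 2) * ((∑ a, (∑ c, ∑ b, q c b * Dq c a b) ^ 2)
          - (∑ c, ∑ a, q c a * (2 * Dv c a - Dκ c a))
          + 2 * ∑ a, κv a * v a) := by
  classical
  set Qm : Matrix (Fin N) (Fin N) ℝ := Matrix.of q with hQmdef
  set Pm : Matrix (Fin N) (Fin N) ℝ := Matrix.of p with hPmdef
  set Rm : Matrix (Fin N) (Fin N) ℝ := Pm - Qm with hRmdef
  set Bm : Fin N → Matrix (Fin N) (Fin N) ℝ := fun c => Matrix.of (Dq c) with hBmdef
  set Cm : Fin N → Fin N → Matrix (Fin N) (Fin N) ℝ := fun b d => Matrix.of (DDq b d) with hCmdef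
  set Dpm : Fin N → Matrix (Fin N) (Fin N) ℝ := fun c => Matrix.of (Dp c) with hDpmdef
  have hQme : ∀ a b, Qm a b = q a b := fun a b => rfl
  have hPme : ∀ a b, Pm a b = p a b := fun a b => rfl
  have hBme : ∀ c a b, Bm c a b = Dq c a b := fun c a b => rfl
  have hCme : ∀ b d a e, Cm b d a e = DDq b d a e := fun b d a e => rfl
  have hDpme : ∀ c a b, Dpm c a b = Dp c a b := fun c a b => rfl
  have hRme : ∀ a b, Rm a b = p a b - q a b := fun a b => rfl
  have hQQ : Qm * Qm = Qm := by
    ext a b; simpa [Matrix.mul_apply, hQme] using hqq a b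
  have hQP : Qm * Pm = Qm := by
    ext a b; simpa [Matrix.mul_apply, hQme, hPme] using hqp a b
  have hQR : Qm * Rm = 0 := by
    rw [hRmdef, Matrix.mul_sub, hQP, hQQ, sub_self]
  have hR4m : ∀ d, Bm d = Bm d * Qm + Qm * Bm d := by
    intro d; ext a b
    simpa [Matrix.mul_apply, hQme, hBme] using hR4 d a b
  have hR5m : ∀ b d, Cm b d = Cm b d * Qm + Bm d * Bm b + Bm b * Bm d + Qm * Cm b d := by
    intro b d; ext a e
    simpa [Matrix.mul_apply, hQme, hBme, hCme] using hR5 b d a e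
  have hQBQ : ∀ d, Qm * Bm d * Qm = 0 := fun d => QMQ_zero Qm (Bm d) hQQ (hR4m d)
  have hQCQ : ∀ b d, Qm * Cm b d * Qm
      = -(Qm * (Bm d * Bm b) * Qm + Qm * (Bm b * Bm d) * Qm) :=
    fun b d => QCQ_eq Qm (Bm d) (Bm b) (Cm b d) hQQ (hR5m b d)
  -- the T vector
  set Tv : Fin N → ℝ := fun b => ∑ c, (Qm * Bm c) c b with hTvdef
  have hTvalt : ∀ b, Tv b = ∑ c, ∑ a, q c a * Dq c a b := by
    intro b
    refine Finset.sum_congr rfl fun c _ => ?_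
    rw [Matrix.mul_apply]
    rfl
  -- S in terms of matrices
  have hSalt : ∀ b, S b = ∑ d, (Bm d * Rm) b d := by
    intro b; rw [hS b]
    refine Finset.sum_congr rfl fun d _ => ?_
    rw [Matrix.mul_apply]
    refine Finset.sum_congr rfl fun e _ => ?_
    rw [hBme, hRme, hpsym e d, hqsym e d]; ring
  have hBR : ∀ d, Bm d * Rm = Qm * (Bm d * Rm) := by
    intro d
    conv_lhs => rw [hR4m d]
    rw [add_mul, mul_assoc (Bm d) Qm Rm, hQR, mul_zero, zero_add, mul_assoc]
  have f5 : ∀ b, S b = ∑ m, q b m * S m := by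
    intro b
    rw [hSalt b]
    calc ∑ d, (Bm d * Rm) b d = ∑ d, (Qm * (Bm d * Rm)) b d := by
          exact Finset.sum_congr rfl fun d _ => by rw [← hBR d]
      _ = ∑ d, ∑ m, q b m * (Bm d * Rm) m d := by
          exact Finset.sum_congr rfl fun d _ => by rw [Matrix.mul_apply]; rfl
      _ = ∑ m, ∑ d, q b m * (Bm d * Rm) m d := Finset.sum_comm
      _ = ∑ m, q b m * ∑ d, (Bm d * Rm) m d := by
          exact Finset.sum_congr rfl fun m _ => (Finset.mul_sum _ _ _).symm
      _ = ∑ m, q b m * S m := by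
          exact Finset.sum_congr rfl fun m _ => by rw [← hSalt m]
  have f4 : ∀ m, (∑ b, q m b * Tv b) = 0 := by
    intro m
    have step : (∑ b, q m b * Tv b) = ∑ c, (Qm * Bm c * Qm) c m := by
      calc ∑ b, q m b * Tv b = ∑ b, ∑ c, q m b * (Qm * Bm c) c b := by
            exact Finset.sum_congr rfl fun b _ => by rw [hTvdef]; exact Finset.mul_sum _ _ _
        _ = ∑ c, ∑ b, q m b * (Qm * Bm c) c b := Finset.sum_comm
        _ = ∑ c, ∑ b, (Qm * Bm c) c b * Qm b m := by
            refine Finset.sum_congr rfl fun c _ => Finset.sum_congr rfl fun b _ => ?_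
            rw [hQme, hqsym m b]; ring
        _ = ∑ c, (Qm * Bm c * Qm) c m := by
            exact Finset.sum_congr rfl fun c _ => (Matrix.mul_apply).symm
    rw [step]
    simp [hQBQ]
  have f6 : (∑ b, Tv b * S b) = 0 := by
    calc ∑ b, Tv b * S b = ∑ b, ∑ m, Tv b * (q b m * S m) := by
          refine Finset.sum_congr rfl fun b _ => ?_
          rw [f5 b, Finset.mul_sum]
      _ = ∑ m, ∑ b, Tv b * (q b m * S m) := Finset.sum_comm
      _ = ∑ m, (∑ b, q m b * Tv b) * S m := by
          refine Finset.sum_congr rfl fun m _ => ?_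
          rw [Finset.sum_mul]
          refine Finset.sum_congr rfl fun b _ => ?_
          rw [hqsym m b]; ring
      _ = 0 := by simp [f4]

  -- Part A : div V decomposition
  have hrq0 : ∀ c b, (∑ a, (p c a - q c a) * q a b) = 0 := by
    intro c b
    calc ∑ a, (p c a - q c a) * q a b
        = (∑ a, p c a * q a b) - ∑ a, q c a * q a b := by
          rw [← Finset.sum_sub_distrib]
          exact Finset.sum_congr rfl fun a _ => by ring
      _ = 0 := by rw [hpq, hqq, sub_self]
  have hG1 : (∑ c, ∑ a, p c a * Dv c a)
      = (∑ c, ∑ a, q c a * Dv c a) + ∑ b, S b * v b := by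
    have hdiff : (∑ c, ∑ a, (p c a - q c a) * Dv c a) = ∑ b, S b * v b := by
      have hsplit : (∑ c, ∑ a, (p c a - q c a) * Dv c a)
          = (∑ c, ∑ a, ∑ b, (p c a - q c a) * (Dq c a b * v b))
            + (∑ c, ∑ a, ∑ b, (p c a - q c a) * (q a b * Dv c b)) := by
        rw [← Finset.sum_add_distrib]
        refine Finset.sum_congr rfl fun c _ => ?_
        rw [← Finset.sum_add_distrib]
        refine Finset.sum_congr rfl fun a _ => ?_
        rw [hR9 c a, ← Finset.mul_sum, ← Finset.mul_sum, ← mul_add]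
      have hp2 : (∑ c, ∑ a, ∑ b, (p c a - q c a) * (q a b * Dv c b)) = 0 := by
        have step : ∀ c, (∑ a, ∑ b, (p c a - q c a) * (q a b * Dv c b))
            = ∑ b, (∑ a, (p c a - q c a) * q a b) * Dv c b := by
          intro c
          rw [Finset.sum_comm]
          refine Finset.sum_congr rfl fun b _ => ?_
          rw [Finset.sum_mul]
          exact Finset.sum_congr rfl fun a _ => by ring
        calc (∑ c, ∑ a, ∑ b, (p c a - q c a) * (q a b * Dv c b))
            = ∑ c, ∑ b, (∑ a, (p c a - q c a) * q a b) * Dv c b :=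
              Finset.sum_congr rfl fun c _ => step c
          _ = 0 := by simp [hrq0]
      have hp1 : (∑ c, ∑ a, ∑ b, (p c a - q c a) * (Dq c a b * v b)) = ∑ b, S b * v b := by
        calc (∑ c, ∑ a, ∑ b, (p c a - q c a) * (Dq c a b * v b))
            = ∑ c, ∑ b, ∑ a, (p c a - q c a) * (Dq c a b * v b) :=
              Finset.sum_congr rfl fun c _ => Finset.sum_comm
          _ = ∑ b, ∑ c, ∑ a, (p c a - q c a) * (Dq c a b * v b) := Finset.sum_comm
          _ = ∑ b, S b * v b := by
              refine Finset.sum_congr rfl fun b _ => ?_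
              rw [hS b, Finset.sum_mul]
              refine Finset.sum_congr rfl fun c _ => ?_
              rw [Finset.sum_mul]
              refine Finset.sum_congr rfl fun a _ => ?_
              rw [hDqsym c a b]; ring
      rw [hsplit, hp1, hp2, add_zero]
    calc (∑ c, ∑ a, p c a * Dv c a)
        = (∑ c, ∑ a, (q c a * Dv c a + (p c a - q c a) * Dv c a)) := by
          refine Finset.sum_congr rfl fun c _ => Finset.sum_congr rfl fun a _ => by ring
      _ = (∑ c, ∑ a, q c a * Dv c a) + ∑ c, ∑ a, (p c a - q c a) * Dv c a := by
          rw [← Finset.sum_add_distrib]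
          exact Finset.sum_congr rfl fun c _ => Finset.sum_add_distrib
      _ = (∑ c, ∑ a, q c a * Dv c a) + ∑ b, S b * v b := by rw [hdiff]
  -- κ-V pairing
  have hG5 : (∑ a, κv a * v a) = -∑ b, S b * v b := by
    calc ∑ a, κv a * v a = ∑ a, -(∑ b, q a b * S b) * v a := by
          exact Finset.sum_congr rfl fun a _ => by rw [hκ a]
      _ = -∑ a, ∑ b, S b * (q a b * v a) := by
          rw [← Finset.sum_neg_distrib]
          refine Finset.sum_congr rfl fun a _ => ?_
          rw [neg_mul]
          congr 1
          rw [Finset.sum_mul]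
          exact Finset.sum_congr rfl fun b _ => by ring
      _ = -∑ b, ∑ a, S b * (q a b * v a) := by rw [Finset.sum_comm]
      _ = -∑ b, S b * v b := by
          refine congrArg _ (Finset.sum_congr rfl fun b _ => ?_)
          rw [← Finset.mul_sum]
          congr 1
          calc ∑ a, q a b * v a = ∑ a, q b a * v a :=
                Finset.sum_congr rfl fun a _ => by rw [hqsym a b]
            _ = v b := hv b

  -- contraction of Q with Dκ
  have hm3 : (∑ c, ∑ a, q c a * Dκ c a) = -(∑ c, ∑ b, q c b * DS c b) := by
    have hA1 : (∑ c, ∑ a, ∑ b, q c a * (Dq c a b * S b)) = ∑ b, Tv b * S b := by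
      calc (∑ c, ∑ a, ∑ b, q c a * (Dq c a b * S b))
          = ∑ c, ∑ b, ∑ a, q c a * (Dq c a b * S b) :=
            Finset.sum_congr rfl fun c _ => Finset.sum_comm
        _ = ∑ b, ∑ c, ∑ a, q c a * (Dq c a b * S b) := Finset.sum_comm
        _ = ∑ b, (∑ c, ∑ a, q c a * Dq c a b) * S b := by
            refine Finset.sum_congr rfl fun b _ => ?_
            rw [Finset.sum_mul]
            refine Finset.sum_congr rfl fun c _ => ?_
            rw [Finset.sum_mul]
            exact Finset.sum_congr rfl fun a _ => by ring
        _ = ∑ b, Tv b * S b := by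
            exact Finset.sum_congr rfl fun b _ => by rw [← hTvalt b]
    have hA2 : (∑ c, ∑ a, ∑ b, q c a * (q a b * DS c b)) = ∑ c, ∑ b, q c b * DS c b := by
      refine Finset.sum_congr rfl fun c _ => ?_
      calc (∑ a, ∑ b, q c a * (q a b * DS c b))
          = ∑ b, ∑ a, q c a * (q a b * DS c b) := Finset.sum_comm
        _ = ∑ b, (∑ a, q c a * q a b) * DS c b := by
            refine Finset.sum_congr rfl fun b _ => ?_
            rw [Finset.sum_mul]
            exact Finset.sum_congr rfl fun a _ => by ring
        _ = ∑ b, q c b * DS c b := by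
            exact Finset.sum_congr rfl fun b _ => by rw [hqq c b]
    calc (∑ c, ∑ a, q c a * Dκ c a)
        = ∑ c, ∑ a, (-(q c a * (∑ b, Dq c a b * S b)) + -(q c a * (∑ b, q a b * DS c b))) := by
          refine Finset.sum_congr rfl fun c _ => Finset.sum_congr rfl fun a _ => ?_
          rw [hDκ c a]; ring
      _ = (∑ c, ∑ a, -(q c a * (∑ b, Dq c a b * S b)))
          + (∑ c, ∑ a, -(q c a * (∑ b, q a b * DS c b))) := by
          rw [← Finset.sum_add_distrib]
          exact Finset.sum_congr rfl fun c _ => Finset.sum_add_distrib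
      _ = -(∑ c, ∑ a, q c a * (∑ b, Dq c a b * S b))
          + -(∑ c, ∑ a, q c a * (∑ b, q a b * DS c b)) := by
          simp [Finset.sum_neg_distrib]
      _ = -(∑ c, ∑ a, ∑ b, q c a * (Dq c a b * S b))
          + -(∑ c, ∑ a, ∑ b, q c a * (q a b * DS c b)) := by
          congr 2
          · exact Finset.sum_congr rfl fun c _ => Finset.sum_congr rfl fun a _ =>
              Finset.mul_sum _ _ _
          · exact Finset.sum_congr rfl fun c _ => Finset.sum_congr rfl fun a _ =>
              Finset.mul_sum _ _ _
      _ = -(∑ c, ∑ b, q c b * DS c b) := by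
          rw [hA1, hA2, f6, neg_zero, zero_add]
  -- expansion of the Q-contraction of DS
  have hm4 : (∑ c, ∑ b, q c b * DS c b)
      = (∑ c, ∑ d, (Dpm c * Bm d * Qm) d c) - (∑ c, ∑ d, (Bm c * Bm d * Qm) d c)
        + ∑ c, ∑ d, (Qm * Cm c d * Rm) c d := by
    have hDS1 : ∀ c, (∑ b, q c b * (∑ d, ∑ e, (Dp c d e - Dq c d e) * Dq d b e))
        = ∑ d, ((Dpm c - Bm c) * Bm d * Qm) d c := by
      intro c
      calc (∑ b, q c b * (∑ d, ∑ e, (Dp c d e - Dq c d e) * Dq d b e))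
          = ∑ b, ∑ d, q c b * (∑ e, (Dp c d e - Dq c d e) * Dq d b e) :=
            Finset.sum_congr rfl fun b _ => Finset.mul_sum _ _ _
        _ = ∑ d, ∑ b, q c b * (∑ e, (Dp c d e - Dq c d e) * Dq d b e) := Finset.sum_comm
        _ = ∑ d, ∑ b, ((Dpm c - Bm c) * Bm d) d b * Qm b c := by
            refine Finset.sum_congr rfl fun d _ => Finset.sum_congr rfl fun b _ => ?_
            rw [Matrix.mul_apply, Finset.sum_mul, Finset.mul_sum]
            refine Finset.sum_congr rfl fun e _ => ?_
            simp only [Matrix.sub_apply, hDpme, hBme, hQme]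
            rw [hDqsym d e b, hqsym c b]
            ring
        _ = ∑ d, ((Dpm c - Bm c) * Bm d * Qm) d c := by
            exact Finset.sum_congr rfl fun d _ => (Matrix.mul_apply).symm
    have hDS2 : ∀ c, (∑ b, q c b * (∑ d, ∑ e, (p d e - q d e) * DDq c d b e))
        = ∑ d, (Qm * Cm c d * Rm) c d := by
      intro c
      calc (∑ b, q c b * (∑ d, ∑ e, (p d e - q d e) * DDq c d b e))
          = ∑ b, ∑ d, q c b * (∑ e, (p d e - q d e) * DDq c d b e) :=
            Finset.sum_congr rfl fun b _ => Finset.mul_sum _ _ _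
        _ = ∑ d, ∑ b, q c b * (∑ e, (p d e - q d e) * DDq c d b e) := Finset.sum_comm
        _ = ∑ d, ∑ b, Qm c b * (Cm c d * Rm) b d := by
            refine Finset.sum_congr rfl fun d _ => Finset.sum_congr rfl fun b _ => ?_
            rw [Matrix.mul_apply, hQme]
            congr 1
            refine Finset.sum_congr rfl fun e _ => ?_
            rw [hCme, hRme, hpsym e d, hqsym e d]; ring
        _ = ∑ d, (Qm * (Cm c d * Rm)) c d := by
            exact Finset.sum_congr rfl fun d _ => (Matrix.mul_apply).symm
        _ = ∑ d, (Qm * Cm c d * Rm) c d := by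
            exact Finset.sum_congr rfl fun d _ => by rw [← mul_assoc]
    calc (∑ c, ∑ b, q c b * DS c b)
        = ∑ c, ((∑ b, q c b * (∑ d, ∑ e, (Dp c d e - Dq c d e) * Dq d b e))
            + ∑ b, q c b * (∑ d, ∑ e, (p d e - q d e) * DDq c d b e)) := by
          refine Finset.sum_congr rfl fun c _ => ?_
          rw [← Finset.sum_add_distrib]
          refine Finset.sum_congr rfl fun b _ => ?_
          rw [hDS c b]; ring
      _ = ∑ c, ((∑ d, ((Dpm c - Bm c) * Bm d * Qm) d c) + ∑ d, (Qm * Cm c d * Rm) c d) := by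
          exact Finset.sum_congr rfl fun c _ => by rw [hDS1 c, hDS2 c]
      _ = (∑ c, ∑ d, ((Dpm c - Bm c) * Bm d * Qm) d c) + ∑ c, ∑ d, (Qm * Cm c d * Rm) c d :=
          Finset.sum_add_distrib
      _ = (∑ c, ∑ d, (Dpm c * Bm d * Qm) d c) - (∑ c, ∑ d, (Bm c * Bm d * Qm) d c)
            + ∑ c, ∑ d, (Qm * Cm c d * Rm) c d := by
          congr 1
          rw [← Finset.sum_sub_distrib]
          refine Finset.sum_congr rfl fun c _ => ?_
          rw [← Finset.sum_sub_distrib]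
          refine Finset.sum_congr rfl fun d _ => ?_
          rw [Matrix.sub_mul, Matrix.sub_mul, Matrix.sub_apply]

  -- symmetry of the matrices
  have hQsymm : Qm.transpose = Qm := by
    ext a b; rw [Matrix.transpose_apply]; exact (hqsym b a)
  have hPsymm : Pm.transpose = Pm := by
    ext a b; rw [Matrix.transpose_apply]; exact (hpsym b a)
  have hBsymm : ∀ c, (Bm c).transpose = Bm c := by
    intro c; ext a b; rw [Matrix.transpose_apply]; exact (hDqsym c b a)
  have hCsymm : ∀ b d, (Cm b d).transpose = Cm b d := by
    intro b d; ext a e; rw [Matrix.transpose_apply]; exact (hDDqsym b d e a)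
  -- reduction of the two halves of the second LHS term
  have hShuffle : ∀ (M : Fin N → Fin N → Matrix (Fin N) (Fin N) ℝ),
      (∑ i, ∑ b, q b i * (∑ c, (M b c) c i)) = ∑ b, ∑ c, ((M b c) * Qm) c b := by
    intro M
    calc (∑ i, ∑ b, q b i * (∑ c, (M b c) c i))
        = ∑ i, ∑ b, ∑ c, q b i * (M b c) c i := by
          exact Finset.sum_congr rfl fun i _ => Finset.sum_congr rfl fun b _ =>
            Finset.mul_sum _ _ _
      _ = ∑ b, ∑ i, ∑ c, q b i * (M b c) c i := Finset.sum_comm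
      _ = ∑ b, ∑ c, ∑ i, q b i * (M b c) c i :=
          Finset.sum_congr rfl fun b _ => Finset.sum_comm
      _ = ∑ b, ∑ c, ((M b c) * Qm) c b := by
          refine Finset.sum_congr rfl fun b _ => Finset.sum_congr rfl fun c _ => ?_
          rw [Matrix.mul_apply]
          refine Finset.sum_congr rfl fun i _ => ?_
          rw [hQme, hqsym b i]; ring
  have hG2a : (∑ i, ∑ b, q b i * (∑ c, ∑ a, Dp b c a * Dq c a i))
      = ∑ c, ∑ d, (Dpm c * Bm d * Qm) d c := by
    have step : (∑ i, ∑ b, q b i * (∑ c, ∑ a, Dp b c a * Dq c a i))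
        = ∑ i, ∑ b, q b i * (∑ c, ((Dpm b * Bm c)) c i) := by
      refine Finset.sum_congr rfl fun i _ => Finset.sum_congr rfl fun b _ => ?_
      congr 1
    rw [step, hShuffle (fun b c => Dpm b * Bm c)]
  have hG2b : (∑ i, ∑ b, q b i * (∑ c, ∑ a, p c a * DDq b c a i))
      = ∑ c, ∑ d, (Qm * Cm c d * Pm) c d := by
    have step : (∑ i, ∑ b, q b i * (∑ c, ∑ a, p c a * DDq b c a i))
        = ∑ i, ∑ b, q b i * (∑ c, ((Pm * Cm b c)) c i) := by
      refine Finset.sum_congr rfl fun i _ => Finset.sum_congr rfl fun b _ => ?_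
      congr 1
    rw [step, hShuffle (fun b c => Pm * Cm b c)]
    refine Finset.sum_congr rfl fun b _ => Finset.sum_congr rfl fun c _ => ?_
    have htr : (Pm * Cm b c * Qm).transpose = Qm * Cm b c * Pm := by
      rw [Matrix.transpose_mul, Matrix.transpose_mul, hQsymm, hCsymm, hPsymm, ← mul_assoc]
    calc (Pm * Cm b c * Qm) c b = (Pm * Cm b c * Qm).transpose b c := by
          rw [Matrix.transpose_apply]
      _ = (Qm * Cm b c * Pm) b c := by rw [htr]
  -- m7 : combine the two DDq contractions
  have hm7 : (∑ c, ∑ d, (Qm * Cm c d * Pm) c d) - (∑ c, ∑ d, (Qm * Cm c d * Rm) c d)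
      = ∑ c, ∑ d, (Qm * Cm c d * Qm) c d := by
    rw [← Finset.sum_sub_distrib]
    refine Finset.sum_congr rfl fun c _ => ?_
    rw [← Finset.sum_sub_distrib]
    refine Finset.sum_congr rfl fun d _ => ?_
    rw [← Matrix.sub_apply, ← Matrix.mul_sub]
    congr 2
    rw [hRmdef, sub_sub_cancel]
  -- m8 : the second-derivative contraction in terms of first derivatives
  have hm8 : (∑ c, ∑ d, (Qm * Cm c d * Qm) c d)
      = -((∑ c, ∑ d, (Qm * (Bm d * Bm c) * Qm) c d)
          + ∑ c, ∑ d, (Qm * (Bm c * Bm d) * Qm) c d) := by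
    have step : ∀ c d, (Qm * Cm c d * Qm) c d
        = -((Qm * (Bm d * Bm c) * Qm) c d + (Qm * (Bm c * Bm d) * Qm) c d) := by
      intro c d
      rw [hQCQ c d, Matrix.neg_apply, Matrix.add_apply]
    calc (∑ c, ∑ d, (Qm * Cm c d * Qm) c d)
        = ∑ c, ∑ d, -((Qm * (Bm d * Bm c) * Qm) c d + (Qm * (Bm c * Bm d) * Qm) c d) :=
          Finset.sum_congr rfl fun c _ => Finset.sum_congr rfl fun d _ => step c d
      _ = -((∑ c, ∑ d, (Qm * (Bm d * Bm c) * Qm) c d)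
          + ∑ c, ∑ d, (Qm * (Bm c * Bm d) * Qm) c d) := by
          simp [Finset.sum_neg_distrib, Finset.sum_add_distrib]
  -- m10 : Y = T2
  have hQBB : ∀ c d, Qm * Bm d * Bm c = Qm * (Bm d * Bm c) * Qm := by
    intro c d
    calc Qm * Bm d * Bm c = Qm * Bm d * (Bm c * Qm + Qm * Bm c) := by rw [← hR4m c]
      _ = Qm * (Bm d * Bm c) * Qm + Qm * Bm d * Qm * Bm c := by noncomm_ring
      _ = Qm * (Bm d * Bm c) * Qm := by rw [hQBQ d, zero_mul, add_zero]
  have hm10 : (∑ c, ∑ d, (Bm c * Bm d * Qm) d c)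
      = ∑ c, ∑ d, (Qm * (Bm d * Bm c) * Qm) c d := by
    refine Finset.sum_congr rfl fun c _ => Finset.sum_congr rfl fun d _ => ?_
    have htr : (Bm c * Bm d * Qm).transpose = Qm * Bm d * Bm c := by
      rw [Matrix.transpose_mul, Matrix.transpose_mul, hQsymm, hBsymm, hBsymm, ← mul_assoc]
    calc (Bm c * Bm d * Qm) d c = (Bm c * Bm d * Qm).transpose c d := by
          rw [Matrix.transpose_apply]
      _ = (Qm * Bm d * Bm c) c d := by rw [htr]
      _ = (Qm * (Bm d * Bm c) * Qm) c d := by rw [hQBB c d]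
  -- m9 : T3 = ∑ Tv²
  have hm9 : (∑ c, ∑ d, (Qm * (Bm c * Bm d) * Qm) c d) = ∑ m, Tv m * Tv m := by
    have hBdQ : ∀ m, (∑ d, (Bm d * Qm) m d) = Tv m := by
      intro m
      refine Finset.sum_congr rfl fun d _ => ?_
      rw [Matrix.mul_apply, Matrix.mul_apply]
      refine Finset.sum_congr rfl fun e _ => ?_
      rw [hQme, hQme, hBme, hBme, hqsym e d, hDqsym d m e]; ring
    calc (∑ c, ∑ d, (Qm * (Bm c * Bm d) * Qm) c d)
        = ∑ c, ∑ d, ((Qm * Bm c) * (Bm d * Qm)) c d := by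
          refine Finset.sum_congr rfl fun c _ => Finset.sum_congr rfl fun d _ => ?_
          congr 1
          noncomm_ring
      _ = ∑ c, ∑ d, ∑ m, (Qm * Bm c) c m * (Bm d * Qm) m d := by
          exact Finset.sum_congr rfl fun c _ => Finset.sum_congr rfl fun d _ =>
            Matrix.mul_apply
      _ = ∑ c, ∑ m, ∑ d, (Qm * Bm c) c m * (Bm d * Qm) m d :=
          Finset.sum_congr rfl fun c _ => Finset.sum_comm
      _ = ∑ m, ∑ c, ∑ d, (Qm * Bm c) c m * (Bm d * Qm) m d := Finset.sum_comm
      _ = ∑ m, (∑ c, (Qm * Bm c) c m) * (∑ d, (Bm d * Qm) m d) := by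
          refine Finset.sum_congr rfl fun m _ => ?_
          rw [Finset.sum_mul_sum]
      _ = ∑ m, Tv m * Tv m := by
          refine Finset.sum_congr rfl fun m _ => ?_
          rw [hBdQ m]
  -- goal term conversions
  have hG3 : (∑ a, (∑ c, ∑ b, q c b * Dq c a b) ^ 2) = ∑ m, Tv m * Tv m := by
    refine Finset.sum_congr rfl fun a _ => ?_
    have : (∑ c, ∑ b, q c b * Dq c a b) = Tv a := by
      rw [hTvalt a]
      exact Finset.sum_congr rfl fun c _ => Finset.sum_congr rfl fun b _ => by
        rw [hDqsym c a b]
    rw [this, sq]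
  have hG4 : (∑ c, ∑ a, q c a * (2 * Dv c a - Dκ c a))
      = 2 * (∑ c, ∑ a, q c a * Dv c a) - (∑ c, ∑ a, q c a * Dκ c a) := by
    rw [Finset.mul_sum, ← Finset.sum_sub_distrib]
    refine Finset.sum_congr rfl fun c _ => ?_
    rw [Finset.mul_sum, ← Finset.sum_sub_distrib]
    exact Finset.sum_congr rfl fun a _ => by ring
  have hG2 : (∑ i, ∑ b, q b i * (∑ c, ∑ a, (Dp b c a * Dq c a i + p c a * DDq b c a i)))
      = (∑ i, ∑ b, q b i * (∑ c, ∑ a, Dp b c a * Dq c a i))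
        + ∑ i, ∑ b, q b i * (∑ c, ∑ a, p c a * DDq b c a i) := by
    rw [← Finset.sum_add_distrib]
    refine Finset.sum_congr rfl fun i _ => ?_
    rw [← Finset.sum_add_distrib]
    refine Finset.sum_congr rfl fun b _ => ?_
    rw [← mul_add]
    congr 1
    rw [← Finset.sum_add_distrib]
    refine Finset.sum_congr rfl fun c _ => ?_
    rw [← Finset.sum_add_distrib]
  -- final assembly
  rw [hG1, hG2, hG2a, hG2b, hG3, hG4, hG5]
  have e1 := hm3
  have e2 := hm4
  have e3 := hm7
  have e4 := hm8
  have e5 := hm9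
  have e6 := hm10
  linarith




end LyapAux

open LyapAux

set_option maxHeartbeats 2000000

/-- The pointwise identity underlying Theorem 4.5 (the ergodic formula for the sum of the
Lyapunov exponents of the gradient foliated Brownian motion with leafwise drift `V`):
`div V + (1/2) ∑ i Xᵢ(div Xᵢ) = −(1/2)(‖H‖² − div_E(2V − κ) + 2⟪κ, V⟫)`,
where `Xᵢ(y) = Pt y eᵢ` are the projected gradient fields, `div` is the ambient
divergence (trace over the range of `P`), `div_E` the leafwise divergence (trace over the
range of `Pt`, which plays the role of `P̃`), `H` the mean curvature and `κ` the tension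
field of the leaves. -/
theorem lyapunov_integrand_identity {N : ℕ}
    (U : Set (EuclideanSpace ℝ (Fin N))) (hU : IsOpen U)
    (P Pt : EuclideanSpace ℝ (Fin N) → (EuclideanSpace ℝ (Fin N) →L[ℝ] EuclideanSpace ℝ (Fin N)))
    (hPreg : ContDiffOn ℝ 2 P U) (hPtreg : ContDiffOn ℝ 2 Pt U)
    (hPsa : ∀ y ∈ U, ∀ v w : EuclideanSpace ℝ (Fin N), ⟪P y v, w⟫_ℝ = ⟪v, P y w⟫_ℝ)
    (hPidem : ∀ y ∈ U, ∀ v : EuclideanSpace ℝ (Fin N), P y (P y v) = P y v)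
    (hPtsa : ∀ y ∈ U, ∀ v w : EuclideanSpace ℝ (Fin N), ⟪Pt y v, w⟫_ℝ = ⟪v, Pt y w⟫_ℝ)
    (hPtidem : ∀ y ∈ U, ∀ v : EuclideanSpace ℝ (Fin N), Pt y (Pt y v) = Pt y v)
    (hcomp : ∀ y ∈ U, (P y).comp (Pt y) = Pt y ∧ (Pt y).comp (P y) = Pt y)
    (V : EuclideanSpace ℝ (Fin N) → EuclideanSpace ℝ (Fin N))
    (hVreg : ContDiffOn ℝ 1 V U)
    (hVleaf : ∀ y ∈ U, V y = Pt y (V y))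
    (X : Fin N → EuclideanSpace ℝ (Fin N) → EuclideanSpace ℝ (Fin N))
    (hX : ∀ i y, X i y = Pt y (EuclideanSpace.single i (1 : ℝ)))
    (divX : Fin N → EuclideanSpace ℝ (Fin N) → ℝ)
    (hdivX : ∀ i y, divX i y = ∑ j : Fin N,
        ⟪(fderiv ℝ (X i) y) (P y (EuclideanSpace.single j (1 : ℝ))),
          P y (EuclideanSpace.single j (1 : ℝ))⟫_ℝ)
    (H : EuclideanSpace ℝ (Fin N) → EuclideanSpace ℝ (Fin N))
    (hH : ∀ y, H y = -∑ j : Fin N,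
        (fderiv ℝ Pt y (Pt y (EuclideanSpace.single j (1 : ℝ))))
          (Pt y (EuclideanSpace.single j (1 : ℝ))))
    (κ : EuclideanSpace ℝ (Fin N) → EuclideanSpace ℝ (Fin N))
    (hκ : ∀ y, κ y = -(Pt y (∑ i : Fin N,
        (fderiv ℝ Pt y ((P y - Pt y) (EuclideanSpace.single i (1 : ℝ))))
          ((P y - Pt y) (EuclideanSpace.single i (1 : ℝ))))))
    (x : EuclideanSpace ℝ (Fin N)) (hx : x ∈ U) :
    (∑ j : Fin N, ⟪(fderiv ℝ V x) (P x (EuclideanSpace.single j (1 : ℝ))),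
        P x (EuclideanSpace.single j (1 : ℝ))⟫_ℝ)
      + (1 / 2) * ∑ i : Fin N, (fderiv ℝ (divX i) x) (X i x)
      = -(1 / 2) * (‖H x‖ ^ 2
          - (∑ j : Fin N,
              ⟪(fderiv ℝ (fun y => (2 : ℝ) • V y - κ y) x)
                  (Pt x (EuclideanSpace.single j (1 : ℝ))),
                Pt x (EuclideanSpace.single j (1 : ℝ))⟫_ℝ)
          + 2 * ⟪κ x, V x⟫_ℝ) := by
  classical
  -- basic differentiability
  have hPt_dAt : ∀ y ∈ U, DifferentiableAt ℝ Pt y := fun y hy =>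
    (hPtreg.contDiffAt (hU.mem_nhds hy)).differentiableAt (by norm_num)
  have hP_dAt : ∀ y ∈ U, DifferentiableAt ℝ P y := fun y hy =>
    (hPreg.contDiffAt (hU.mem_nhds hy)).differentiableAt (by norm_num)
  have hV_dAt : ∀ y ∈ U, DifferentiableAt ℝ V y := fun y hy =>
    (hVreg.contDiffAt (hU.mem_nhds hy)).differentiableAt (by norm_num)
  -- coordinate functions
  set qf : Fin N → Fin N → EuclideanSpace ℝ (Fin N) → ℝ :=
    fun a b y => Pt y (ee N b) a with hqfdef
  set pf : Fin N → Fin N → EuclideanSpace ℝ (Fin N) → ℝ :=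
    fun a b y => P y (ee N b) a with hpfdef
  set vf : Fin N → EuclideanSpace ℝ (Fin N) → ℝ := fun a y => V y a with hvfdef
  set Dqf : Fin N → Fin N → Fin N → EuclideanSpace ℝ (Fin N) → ℝ :=
    fun c a b y => fderiv ℝ (qf a b) y (ee N c) with hDqfdef
  -- regularity of coordinates
  have hq_cd : ∀ a b, ContDiffOn ℝ 2 (qf a b) U := fun a b =>
    (opEntry N a b).contDiff.comp_contDiffOn hPtreg
  have hp_cd : ∀ a b, ContDiffOn ℝ 2 (pf a b) U := fun a b =>
    (opEntry N a b).contDiff.comp_contDiffOn hPreg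
  have hq_dAt : ∀ a b, ∀ y ∈ U, DifferentiableAt ℝ (qf a b) y := fun a b y hy =>
    ((hq_cd a b).contDiffAt (hU.mem_nhds hy)).differentiableAt (by norm_num)
  have hp_dAt : ∀ a b, ∀ y ∈ U, DifferentiableAt ℝ (pf a b) y := fun a b y hy =>
    ((hp_cd a b).contDiffAt (hU.mem_nhds hy)).differentiableAt (by norm_num)
  have hv_dAt : ∀ a, ∀ y ∈ U, DifferentiableAt ℝ (vf a) y := by
    intro a y hy
    have : vf a = (fun u : EuclideanSpace ℝ (Fin N) => u a) ∘ V := rfl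
    rw [this]
    exact ((EuclideanSpace.proj a).differentiableAt).comp y (hV_dAt y hy)
  -- representation of the first derivatives of q
  have hfdq : ∀ a b, ∀ y ∈ U, fderiv ℝ (qf a b) y = (opEntry N a b).comp (fderiv ℝ Pt y) := by
    intro a b y hy
    exact (((opEntry N a b).hasFDerivAt).comp y (hPt_dAt y hy).hasFDerivAt).fderiv
  have hDqrep : ∀ c a b, ∀ y ∈ U, Dqf c a b y = opEntry2 N c b a (fderiv ℝ Pt y) := by
    intro c a b y hy
    rw [hDqfdef]
    simp only [hfdq a b y hy]
    rfl
  have hfPt_C1 : ContDiffOn ℝ 1 (fderiv ℝ Pt) U := hPtreg.fderiv_of_isOpen hU (by norm_num)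
  have hfPt_dAt : ∀ y ∈ U, DifferentiableAt ℝ (fderiv ℝ Pt) y := fun y hy =>
    (hfPt_C1.contDiffAt (hU.mem_nhds hy)).differentiableAt (by norm_num)
  have hDq_dAt : ∀ c a b, ∀ y ∈ U, DifferentiableAt ℝ (Dqf c a b) y := by
    intro c a b y hy
    refine differentiableAt_congr_open hU hy (fun z hz => hDqrep c a b z hz) ?_
    have := hfPt_dAt y hy; fun_prop
  -- pointwise relations on U
  have hqsymU : ∀ y ∈ U, ∀ a b, qf a b y = qf b a y := by
    intro y hy a b
    have h := hPtsa y hy (ee N b) (ee N a)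
    rw [coord_eq_inner] at h
    simp only [hqfdef]
    rw [h, real_inner_comm, coord_eq_inner]
  have hpsymU : ∀ y ∈ U, ∀ a b, pf a b y = pf b a y := by
    intro y hy a b
    have h := hPsa y hy (ee N b) (ee N a)
    rw [coord_eq_inner] at h
    simp only [hpfdef]
    rw [h, real_inner_comm, coord_eq_inner]
  have hqidemU : ∀ y ∈ U, ∀ a b, qf a b y = ∑ c, qf a c y * qf c b y := by
    intro y hy a b
    have h := hPtidem y hy (ee N b)
    have h2 := congrArg (fun u : EuclideanSpace ℝ (Fin N) => u a) h
    simp only at h2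
    rw [clm_coord (Pt y) (Pt y (ee N b)) a] at h2
    simp only [hqfdef]
    rw [← h2]
    exact Finset.sum_congr rfl fun c _ => by ring
  have hpidemU : ∀ y ∈ U, ∀ a b, pf a b y = ∑ c, pf a c y * pf c b y := by
    intro y hy a b
    have h := hPidem y hy (ee N b)
    have h2 := congrArg (fun u : EuclideanSpace ℝ (Fin N) => u a) h
    simp only at h2
    rw [clm_coord (P y) (P y (ee N b)) a] at h2
    simp only [hpfdef]
    rw [← h2]
    exact Finset.sum_congr rfl fun c _ => by ring
  have hpqU : ∀ y ∈ U, ∀ a b, (∑ c, pf a c y * qf c b y) = qf a b y := by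
    intro y hy a b
    have h := congrArg (fun A : EuclideanSpace ℝ (Fin N) →L[ℝ] EuclideanSpace ℝ (Fin N) =>
      A (ee N b) a) ((hcomp y hy).1)
    simp only [ContinuousLinearMap.comp_apply] at h
    rw [clm_coord (P y) (Pt y (ee N b)) a] at h
    simp only [hqfdef, hpfdef]
    rw [← h]
    exact Finset.sum_congr rfl fun c _ => by ring
  have hqpU : ∀ y ∈ U, ∀ a b, (∑ c, qf a c y * pf c b y) = qf a b y := by
    intro y hy a b
    have h := congrArg (fun A : EuclideanSpace ℝ (Fin N) →L[ℝ] EuclideanSpace ℝ (Fin N) =>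
      A (ee N b) a) ((hcomp y hy).2)
    simp only [ContinuousLinearMap.comp_apply] at h
    rw [clm_coord (Pt y) (P y (ee N b)) a] at h
    simp only [hqfdef, hpfdef]
    rw [← h]
    exact Finset.sum_congr rfl fun c _ => by ring
  have hvU : ∀ y ∈ U, ∀ a, (∑ b, qf a b y * vf b y) = vf a y := by
    intro y hy a
    have h := congrArg (fun u : EuclideanSpace ℝ (Fin N) => u a) (hVleaf y hy)
    simp only at h
    rw [clm_coord (Pt y) (V y) a] at h
    simp only [hvfdef, hqfdef]
    rw [h]
    exact Finset.sum_congr rfl fun b _ => by ring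
  -- derivative relations
  have hR4U : ∀ y ∈ U, ∀ d a b, Dqf d a b y
      = (∑ c, Dqf d a c y * qf c b y) + ∑ c, qf a c y * Dqf d c b y := by
    intro y hy d a b
    have h1 : fderiv ℝ (qf a b) y = fderiv ℝ (fun z => ∑ c, qf a c z * qf c b z) y :=
      fderiv_congr_open hU hy (fun z hz => hqidemU z hz a b)
    have h2 : fderiv ℝ (fun z => ∑ c, qf a c z * qf c b z) y (ee N d)
        = ∑ c, (fderiv ℝ (qf a c) y (ee N d) * qf c b y + qf a c y * fderiv ℝ (qf c b) y (ee N d)) :=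
      D_sum_mul _ _ (fun c => hq_dAt a c y hy) (fun c => hq_dAt c b y hy)
    calc Dqf d a b y = fderiv ℝ (qf a b) y (ee N d) := rfl
      _ = ∑ c, (Dqf d a c y * qf c b y + qf a c y * Dqf d c b y) := by rw [h1, h2]
      _ = (∑ c, Dqf d a c y * qf c b y) + ∑ c, qf a c y * Dqf d c b y :=
          Finset.sum_add_distrib
  have hDqsymU : ∀ y ∈ U, ∀ c a b, Dqf c a b y = Dqf c b a y := by
    intro y hy c a b
    have h1 : fderiv ℝ (qf a b) y = fderiv ℝ (qf b a) y :=
      fderiv_congr_open hU hy (fun z hz => hqsymU z hz a b)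
    calc Dqf c a b y = fderiv ℝ (qf a b) y (ee N c) := rfl
      _ = fderiv ℝ (qf b a) y (ee N c) := by rw [h1]
      _ = Dqf c b a y := rfl
  -- second derivative quantities
  set DDqx : Fin N → Fin N → Fin N → Fin N → ℝ :=
    fun b c a i => fderiv ℝ (Dqf c a i) x (ee N b) with hDDqxdef
  have hR5x : ∀ cc d a b, DDqx cc d a b
      = (∑ c, DDqx cc d a c * qf c b x) + (∑ c, Dqf d a c x * Dqf cc c b x)
        + (∑ c, Dqf cc a c x * Dqf d c b x) + ∑ c, qf a c x * DDqx cc d c b := by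
    intro cc d a b
    have h1 : fderiv ℝ (Dqf d a b) x = fderiv ℝ
        (fun z => (∑ c, Dqf d a c z * qf c b z) + ∑ c, qf a c z * Dqf d c b z) x :=
      fderiv_congr_open hU hx (fun z hz => hR4U z hz d a b)
    have hd1 : DifferentiableAt ℝ (fun z => ∑ c, Dqf d a c z * qf c b z) x :=
      DifferentiableAt.fun_sum fun c _ => (hDq_dAt d a c x hx).mul (hq_dAt c b x hx)
    have hd2 : DifferentiableAt ℝ (fun z => ∑ c, qf a c z * Dqf d c b z) x :=
      DifferentiableAt.fun_sum fun c _ => (hq_dAt a c x hx).mul (hDq_dAt d c b x hx)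
    have h2 : fderiv ℝ (fun z => (∑ c, Dqf d a c z * qf c b z) + ∑ c, qf a c z * Dqf d c b z) x
        = fderiv ℝ (fun z => ∑ c, Dqf d a c z * qf c b z) x
          + fderiv ℝ (fun z => ∑ c, qf a c z * Dqf d c b z) x := fderiv_add hd1 hd2
    have h3 : fderiv ℝ (fun z => ∑ c, Dqf d a c z * qf c b z) x (ee N cc)
        = ∑ c, (fderiv ℝ (Dqf d a c) x (ee N cc) * qf c b x
            + Dqf d a c x * fderiv ℝ (qf c b) x (ee N cc)) :=
      D_sum_mul _ _ (fun c => hDq_dAt d a c x hx) (fun c => hq_dAt c b x hx)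
    have h4 : fderiv ℝ (fun z => ∑ c, qf a c z * Dqf d c b z) x (ee N cc)
        = ∑ c, (fderiv ℝ (qf a c) x (ee N cc) * Dqf d c b x
            + qf a c x * fderiv ℝ (Dqf d c b) x (ee N cc)) :=
      D_sum_mul _ _ (fun c => hq_dAt a c x hx) (fun c => hDq_dAt d c b x hx)
    have key : fderiv ℝ (Dqf d a b) x (ee N cc)
        = (∑ c, (DDqx cc d a c * qf c b x + Dqf d a c x * Dqf cc c b x))
          + ∑ c, (Dqf cc a c x * Dqf d c b x + qf a c x * DDqx cc d c b) := by
      rw [h1, h2, ContinuousLinearMap.add_apply, h3, h4]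
    calc DDqx cc d a b = fderiv ℝ (Dqf d a b) x (ee N cc) := rfl
      _ = _ := key
      _ = (∑ c, DDqx cc d a c * qf c b x) + (∑ c, Dqf d a c x * Dqf cc c b x)
          + ((∑ c, Dqf cc a c x * Dqf d c b x) + ∑ c, qf a c x * DDqx cc d c b) := by
          rw [Finset.sum_add_distrib, Finset.sum_add_distrib]
      _ = _ := by ring
  have hDDqsymx : ∀ b c a i, DDqx b c a i = DDqx b c i a := by
    intro b c a i
    have h1 : fderiv ℝ (Dqf c a i) x = fderiv ℝ (Dqf c i a) x :=
      fderiv_congr_open hU hx (fun z hz => hDqsymU z hz c a i)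
    calc DDqx b c a i = fderiv ℝ (Dqf c a i) x (ee N b) := rfl
      _ = fderiv ℝ (Dqf c i a) x (ee N b) := by rw [h1]
      _ = DDqx b c i a := rfl
  have hR9x : ∀ c a, fderiv ℝ (vf a) x (ee N c)
      = (∑ b, Dqf c a b x * vf b x) + ∑ b, qf a b x * fderiv ℝ (vf b) x (ee N c) := by
    intro c a
    have h1 : fderiv ℝ (vf a) x = fderiv ℝ (fun z => ∑ b, qf a b z * vf b z) x :=
      fderiv_congr_open hU hx (fun z hz => (hvU z hz a).symm)
    have h2 : fderiv ℝ (fun z => ∑ b, qf a b z * vf b z) x (ee N c)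
        = ∑ b, (fderiv ℝ (qf a b) x (ee N c) * vf b x + qf a b x * fderiv ℝ (vf b) x (ee N c)) :=
      D_sum_mul _ _ (fun b => hq_dAt a b x hx) (fun b => hv_dAt b x hx)
    calc fderiv ℝ (vf a) x (ee N c) = ∑ b, (Dqf c a b x * vf b x
          + qf a b x * fderiv ℝ (vf b) x (ee N c)) := by rw [h1, h2]
      _ = _ := Finset.sum_add_distrib
  -- the leaf-tension coordinates
  have hrrU : ∀ y ∈ U, ∀ c d, (∑ i, (pf c i y - qf c i y) * (pf d i y - qf d i y))
      = pf c d y - qf c d y := by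
    intro y hy c d
    calc (∑ i, (pf c i y - qf c i y) * (pf d i y - qf d i y))
        = ∑ i, (pf c i y * pf i d y - pf c i y * qf i d y
            - qf c i y * pf i d y + qf c i y * qf i d y) := by
          refine Finset.sum_congr rfl fun i _ => ?_
          rw [hpsymU y hy d i, hqsymU y hy d i]
          ring
      _ = (∑ i, pf c i y * pf i d y) - (∑ i, pf c i y * qf i d y)
            - (∑ i, qf c i y * pf i d y) + ∑ i, qf c i y * qf i d y := by
          rw [Finset.sum_add_distrib, Finset.sum_sub_distrib, Finset.sum_sub_distrib]
      _ = pf c d y - qf c d y - qf c d y + qf c d y := by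
          rw [← hpidemU y hy c d, hpqU y hy c d, hqpU y hy c d, ← hqidemU y hy c d]
      _ = pf c d y - qf c d y := by ring
  set Sf : Fin N → EuclideanSpace ℝ (Fin N) → ℝ :=
    fun b y => ∑ d, ∑ e, (pf d e y - qf d e y) * Dqf d b e y with hSfdef
  have hw_coord : ∀ y, ∀ i c, ((P y - Pt y) (ee N i)) c = pf c i y - qf c i y := by
    intro y i c
    rw [ContinuousLinearMap.sub_apply]
    rfl
  have hκU : ∀ y ∈ U, ∀ a, κ y a = -∑ b, qf a b y * Sf b y := by
    intro y hy a
    have hGb : ∀ b, (∑ i, (fderiv ℝ Pt y ((P y - Pt y) (ee N i)))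
        ((P y - Pt y) (ee N i))) b = Sf b y := by
      intro b
      rw [sum_coord]
      have hterm : ∀ i, ((fderiv ℝ Pt y ((P y - Pt y) (ee N i)))
          ((P y - Pt y) (ee N i))) b
          = ∑ c, (pf c i y - qf c i y) * (∑ d, (pf d i y - qf d i y) * Dqf c b d y) := by
        intro i
        set w : EuclideanSpace ℝ (Fin N) := (P y - Pt y) (ee N i) with hwdef
        have hA : ((ContinuousLinearMap.apply ℝ (EuclideanSpace ℝ (Fin N)) w).comp
            (fderiv ℝ Pt y)) w b = (fderiv ℝ Pt y w) w b := rfl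
        rw [← hA, clm_coord]
        refine Finset.sum_congr rfl fun c _ => ?_
        have hAc : ((ContinuousLinearMap.apply ℝ (EuclideanSpace ℝ (Fin N)) w).comp
            (fderiv ℝ Pt y)) (ee N c) b = (fderiv ℝ Pt y (ee N c)) w b := rfl
        rw [hAc, clm_coord (fderiv ℝ Pt y (ee N c)) w b]
        rw [hwdef]
        rw [hw_coord y i c]
        congr 1
        refine Finset.sum_congr rfl fun d _ => ?_
        rw [hw_coord y i d]
        have : (fderiv ℝ Pt y (ee N c)) (ee N d) b = Dqf c b d y := (hDqrep c b d y hy).symm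
        rw [this]
      calc (∑ i, ((fderiv ℝ Pt y ((P y - Pt y) (ee N i))) ((P y - Pt y) (ee N i))) b)
          = ∑ i, ∑ c, (pf c i y - qf c i y) * (∑ d, (pf d i y - qf d i y) * Dqf c b d y) :=
            Finset.sum_congr rfl fun i _ => hterm i
        _ = ∑ i, ∑ c, ∑ d, (pf c i y - qf c i y) * ((pf d i y - qf d i y) * Dqf c b d y) := by
            exact Finset.sum_congr rfl fun i _ => Finset.sum_congr rfl fun c _ =>
              Finset.mul_sum _ _ _
        _ = ∑ c, ∑ i, ∑ d, (pf c i y - qf c i y) * ((pf d i y - qf d i y) * Dqf c b d y) :=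
            Finset.sum_comm
        _ = ∑ c, ∑ d, ∑ i, (pf c i y - qf c i y) * ((pf d i y - qf d i y) * Dqf c b d y) :=
            Finset.sum_congr rfl fun c _ => Finset.sum_comm
        _ = ∑ c, ∑ d, (∑ i, (pf c i y - qf c i y) * (pf d i y - qf d i y)) * Dqf c b d y := by
            refine Finset.sum_congr rfl fun c _ => Finset.sum_congr rfl fun d _ => ?_
            rw [Finset.sum_mul]
            exact Finset.sum_congr rfl fun i _ => by ring
        _ = ∑ c, ∑ d, (pf c d y - qf c d y) * Dqf c b d y := by
            refine Finset.sum_congr rfl fun c _ => Finset.sum_congr rfl fun d _ => ?_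
            rw [hrrU y hy c d]
        _ = Sf b y := rfl
    have h := congrArg (fun u : EuclideanSpace ℝ (Fin N) => u a) (hκ y)
    simp only at h
    rw [h]
    have hnegc : ∀ (u : EuclideanSpace ℝ (Fin N)) (a : Fin N), (-u) a = -(u a) := fun _ _ => rfl
    rw [hnegc]
    congr 1
    rw [clm_coord (Pt y) _ a]
    refine Finset.sum_congr rfl fun b _ => ?_
    rw [hGb b]
    exact mul_comm _ _
  -- differentiability of S and κ coordinates at x
  have hSf_dAt : ∀ b, DifferentiableAt ℝ (Sf b) x := by
    intro b
    show DifferentiableAt ℝ (fun y => ∑ d, ∑ e, (pf d e y - qf d e y) * Dqf d b e y) x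
    refine DifferentiableAt.fun_sum fun d _ => DifferentiableAt.fun_sum fun e _ => ?_
    exact ((hp_dAt d e x hx).sub (hq_dAt d e x hx)).mul (hDq_dAt d b e x hx)
  set DSx : Fin N → Fin N → ℝ := fun c b => fderiv ℝ (Sf b) x (ee N c) with hDSxdef
  have hDSx : ∀ c b, DSx c b
      = (∑ d, ∑ e, (fderiv ℝ (pf d e) x (ee N c) - Dqf c d e x) * Dqf d b e x)
        + ∑ d, ∑ e, (pf d e x - qf d e x) * DDqx c d b e := by
    intro c b
    have h2 : fderiv ℝ (Sf b) x (ee N c)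
        = ∑ d, ∑ e, (fderiv ℝ (fun y => pf d e y - qf d e y) x (ee N c) * Dqf d b e x
            + (pf d e x - qf d e x) * fderiv ℝ (Dqf d b e) x (ee N c)) := by
      rw [hSfdef]
      exact D_sum2_mul _ _
        (fun d e => (hp_dAt d e x hx).sub (hq_dAt d e x hx))
        (fun d e => hDq_dAt d b e x hx)
    have h3 : ∀ d e, fderiv ℝ (fun y => pf d e y - qf d e y) x (ee N c)
        = fderiv ℝ (pf d e) x (ee N c) - Dqf c d e x := by
      intro d e
      rw [fderiv_fun_sub (hp_dAt d e x hx) (hq_dAt d e x hx)]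
      rfl
    calc DSx c b = ∑ d, ∑ e, (fderiv ℝ (fun y => pf d e y - qf d e y) x (ee N c) * Dqf d b e x
            + (pf d e x - qf d e x) * fderiv ℝ (Dqf d b e) x (ee N c)) := h2
      _ = ∑ d, ∑ e, ((fderiv ℝ (pf d e) x (ee N c) - Dqf c d e x) * Dqf d b e x
            + (pf d e x - qf d e x) * DDqx c d b e) := by
          refine Finset.sum_congr rfl fun d _ => Finset.sum_congr rfl fun e _ => ?_
          rw [h3 d e]
      _ = _ := by
          rw [← Finset.sum_add_distrib]
          refine Finset.sum_congr rfl fun d _ => ?_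
          rw [← Finset.sum_add_distrib]
  have hκc_dAt : ∀ a, DifferentiableAt ℝ (fun y => κ y a) x := by
    intro a
    refine differentiableAt_congr_open hU hx (fun y hy => hκU y hy a) ?_
    exact (DifferentiableAt.fun_sum fun b _ =>
      (hq_dAt a b x hx).mul (hSf_dAt b)).neg
  have hDκx : ∀ c a, fderiv ℝ (fun y => κ y a) x (ee N c)
      = -((∑ b, Dqf c a b x * Sf b x) + ∑ b, qf a b x * DSx c b) := by
    intro c a
    have h1 : fderiv ℝ (fun y => κ y a) x
        = fderiv ℝ (fun y => -∑ b, qf a b y * Sf b y) x :=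
      fderiv_congr_open hU hx (fun y hy => hκU y hy a)
    have hin : DifferentiableAt ℝ (fun y => ∑ b, qf a b y * Sf b y) x :=
      DifferentiableAt.fun_sum fun b _ => (hq_dAt a b x hx).mul (hSf_dAt b)
    have h2 : fderiv ℝ (fun y => -∑ b, qf a b y * Sf b y) x
        = -fderiv ℝ (fun y => ∑ b, qf a b y * Sf b y) x := fderiv_fun_neg
    have h3 : fderiv ℝ (fun y => ∑ b, qf a b y * Sf b y) x (ee N c)
        = ∑ b, (fderiv ℝ (qf a b) x (ee N c) * Sf b x + qf a b x * fderiv ℝ (Sf b) x (ee N c)) :=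
      D_sum_mul _ _ (fun b => hq_dAt a b x hx) (fun b => hSf_dAt b)
    rw [h1, h2, ContinuousLinearMap.neg_apply, h3]
    rw [Finset.sum_add_distrib]
  -- differentiability of the vector field κ at x
  have hκ_dAt : DifferentiableAt ℝ κ x := by
    have hform : κ = fun y => -(Pt y (∑ i, (fderiv ℝ Pt y ((P y - Pt y) (ee N i)))
        ((P y - Pt y) (ee N i)))) := funext fun y => hκ y
    rw [hform]
    have hw_dAt : ∀ i, DifferentiableAt ℝ (fun y => (P y - Pt y) (ee N i)) x := by
      intro i
      exact ((hP_dAt x hx).sub (hPt_dAt x hx)).clm_apply (differentiableAt_const _)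
    have hin : DifferentiableAt ℝ (fun y => ∑ i, (fderiv ℝ Pt y ((P y - Pt y) (ee N i)))
        ((P y - Pt y) (ee N i))) x := by
      refine DifferentiableAt.fun_sum fun i _ => ?_
      exact ((hfPt_dAt x hx).clm_apply (hw_dAt i)).clm_apply (hw_dAt i)
    exact ((hPt_dAt x hx).clm_apply hin).neg
  -- conversion of the goal terms to coordinates
  have hC1 : (∑ j : Fin N, ⟪(fderiv ℝ V x) (P x (EuclideanSpace.single j (1 : ℝ))),
        P x (EuclideanSpace.single j (1 : ℝ))⟫_ℝ)
      = ∑ c, ∑ a, pf c a x * fderiv ℝ (vf a) x (ee N c) := by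
    refine Eq.trans (div_reduce (hV_dAt x hx) (P x) (hPsa x hx) (hPidem x hx)) ?_
    rfl
  have hXd : ∀ i, ∀ y ∈ U, DifferentiableAt ℝ (X i) y := by
    intro i y hy
    have hXf : X i = fun z => Pt z (ee N i) := funext fun z => hX i z
    rw [hXf]
    exact (hPt_dAt y hy).clm_apply (differentiableAt_const _)
  have hdivXU : ∀ i, ∀ y ∈ U, divX i y = ∑ c, ∑ a, pf c a y * Dqf c a i y := by
    intro i y hy
    rw [hdivX i y]
    refine Eq.trans (div_reduce (hXd i y hy) (P y) (hPsa y hy) (hPidem y hy)) ?_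
    refine Finset.sum_congr rfl fun c _ => Finset.sum_congr rfl fun a _ => ?_
    congr 1
    have hXa : (fun z => X i z a) = qf a i := funext fun z => by rw [hX i z]
    rw [hXa]
  have hC2 : (∑ i : Fin N, (fderiv ℝ (divX i) x) (X i x))
      = ∑ i, ∑ b, qf b i x * (∑ c, ∑ a, (fderiv ℝ (pf c a) x (ee N b) * Dqf c a i x
          + pf c a x * DDqx b c a i)) := by
    refine Finset.sum_congr rfl fun i _ => ?_
    have h1 : fderiv ℝ (divX i) x = fderiv ℝ (fun y => ∑ c, ∑ a, pf c a y * Dqf c a i y) x :=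
      fderiv_congr_open hU hx (fun y hy => hdivXU i y hy)
    have h2 : ∀ b, fderiv ℝ (fun y => ∑ c, ∑ a, pf c a y * Dqf c a i y) x (ee N b)
        = ∑ c, ∑ a, (fderiv ℝ (pf c a) x (ee N b) * Dqf c a i x
            + pf c a x * DDqx b c a i) := fun b =>
      D_sum2_mul _ _ (fun c a => hp_dAt c a x hx) (fun c a => hDq_dAt c a i x hx)
    calc (fderiv ℝ (divX i) x) (X i x)
        = fderiv ℝ (fun y => ∑ c, ∑ a, pf c a y * Dqf c a i y) x (X i x) := by rw [h1]
      _ = ∑ b, (X i x) b * fderiv ℝ (fun y => ∑ c, ∑ a, pf c a y * Dqf c a i y) x (ee N b) :=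
          fderiv_dir _
      _ = ∑ b, qf b i x * (∑ c, ∑ a, (fderiv ℝ (pf c a) x (ee N b) * Dqf c a i x
            + pf c a x * DDqx b c a i)) := by
          refine Finset.sum_congr rfl fun b _ => ?_
          rw [h2 b]
          congr 1
          rw [hX i x]
  have hHcoord : ∀ a, H x a = -∑ c, ∑ b, qf c b x * Dqf c a b x := by
    intro a
    have h := congrArg (fun u : EuclideanSpace ℝ (Fin N) => u a) (hH x)
    simp only at h
    rw [h]
    have hnegc : ∀ (u : EuclideanSpace ℝ (Fin N)) (a : Fin N), (-u) a = -(u a) := fun _ _ => rfl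
    rw [hnegc, sum_coord]
    congr 1
    have hterm : ∀ j, ((fderiv ℝ Pt x (Pt x (EuclideanSpace.single j (1:ℝ))))
        (Pt x (EuclideanSpace.single j (1:ℝ)))) a
        = ∑ c, qf c j x * (∑ d, qf d j x * Dqf c a d x) := by
      intro j
      set w : EuclideanSpace ℝ (Fin N) := Pt x (ee N j) with hwdef
      have hA : ((ContinuousLinearMap.apply ℝ (EuclideanSpace ℝ (Fin N)) w).comp
          (fderiv ℝ Pt x)) w a = (fderiv ℝ Pt x w) w a := rfl
      refine Eq.trans hA.symm ?_
      rw [clm_coord]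
      refine Finset.sum_congr rfl fun c _ => ?_
      have hAc : ((ContinuousLinearMap.apply ℝ (EuclideanSpace ℝ (Fin N)) w).comp
          (fderiv ℝ Pt x)) (ee N c) a = (fderiv ℝ Pt x (ee N c)) w a := rfl
      rw [hAc, clm_coord (fderiv ℝ Pt x (ee N c)) w a]
      congr 1
      refine Finset.sum_congr rfl fun d _ => ?_
      have : (fderiv ℝ Pt x (ee N c)) (ee N d) a = Dqf c a d x := (hDqrep c a d x hx).symm
      rw [this]
    calc (∑ j, ((fderiv ℝ Pt x (Pt x (EuclideanSpace.single j (1:ℝ))))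
          (Pt x (EuclideanSpace.single j (1:ℝ)))) a)
        = ∑ j, ∑ c, qf c j x * (∑ d, qf d j x * Dqf c a d x) :=
          Finset.sum_congr rfl fun j _ => hterm j
      _ = ∑ j, ∑ c, ∑ d, qf c j x * (qf d j x * Dqf c a d x) := by
          exact Finset.sum_congr rfl fun j _ => Finset.sum_congr rfl fun c _ =>
            Finset.mul_sum _ _ _
      _ = ∑ c, ∑ j, ∑ d, qf c j x * (qf d j x * Dqf c a d x) := Finset.sum_comm
      _ = ∑ c, ∑ d, ∑ j, qf c j x * (qf d j x * Dqf c a d x) :=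
          Finset.sum_congr rfl fun c _ => Finset.sum_comm
      _ = ∑ c, ∑ d, (∑ j, qf c j x * qf d j x) * Dqf c a d x := by
          refine Finset.sum_congr rfl fun c _ => Finset.sum_congr rfl fun d _ => ?_
          rw [Finset.sum_mul]
          exact Finset.sum_congr rfl fun j _ => by ring
      _ = ∑ c, ∑ d, qf c d x * Dqf c a d x := by
          refine Finset.sum_congr rfl fun c _ => Finset.sum_congr rfl fun d _ => ?_
          have := proj_collapse (Pt x) (hPtsa x hx) (hPtidem x hx) c d
          rw [this]
  have hC3 : ‖H x‖ ^ 2 = ∑ a, (∑ c, ∑ b, qf c b x * Dqf c a b x) ^ 2 := by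
    rw [← real_inner_self_eq_norm_sq, inner_coord]
    refine Finset.sum_congr rfl fun a _ => ?_
    rw [hHcoord a]
    ring
  have hC4 : (∑ j : Fin N, ⟪(fderiv ℝ (fun y => (2 : ℝ) • V y - κ y) x)
        (Pt x (EuclideanSpace.single j (1 : ℝ))), Pt x (EuclideanSpace.single j (1 : ℝ))⟫_ℝ)
      = ∑ c, ∑ a, qf c a x * (2 * fderiv ℝ (vf a) x (ee N c)
          - fderiv ℝ (fun y => κ y a) x (ee N c)) := by
    have hF_dAt : DifferentiableAt ℝ (fun y => (2 : ℝ) • V y - κ y) x :=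
      ((hV_dAt x hx).const_smul (2:ℝ)).sub hκ_dAt
    refine Eq.trans (div_reduce hF_dAt (Pt x) (hPtsa x hx) (hPtidem x hx)) ?_
    refine Finset.sum_congr rfl fun c _ => Finset.sum_congr rfl fun a _ => ?_
    congr 1
    have hco : (fun z => ((2 : ℝ) • V z - κ z) a) = fun z => 2 * vf a z - κ z a := rfl
    rw [hco, fderiv_fun_sub ((hv_dAt a x hx).const_mul 2) (hκc_dAt a)]
    rw [ContinuousLinearMap.sub_apply, fderiv_const_mul (hv_dAt a x hx) (2:ℝ),
      ContinuousLinearMap.smul_apply, smul_eq_mul]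
  have hC5 : ⟪κ x, V x⟫_ℝ = ∑ a, κ x a * vf a x := inner_coord _ _
  -- final assembly
  rw [hC1, hC2, hC3, hC4, hC5]
  exact key_algebra (fun a b => qf a b x) (fun a b => pf a b x)
    (fun c a => fderiv ℝ (vf a) x (ee N c))
    (fun c a => fderiv ℝ (fun y => κ y a) x (ee N c)) DSx
    (fun a => vf a x) (fun b => Sf b x) (fun a => κ x a)
    (fun c a b => Dqf c a b x) (fun b c a => fderiv ℝ (pf c a) x (ee N b)) DDqx
    (hqsymU x hx) (hpsymU x hx)
    (fun a b => (hqidemU x hx a b).symm)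
    (hpqU x hx) (hqpU x hx) (hvU x hx)
    (hDqsymU x hx) hDDqsymx
    (hR4U x hx) hR5x hR9x
    (fun b => rfl) (hκU x hx) hDSx hDκx
end
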